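/- arXiv:2510.07245 — 3 statements merged into one kernel-verified Lean document; each statement's English description precedes it below -/
import Mathlib

section
/- In the secret-sharing teacher class construction with parameter d: for all integers k,d ≥ 1, every L ≥ 4(k+1)d, and every (possibly randomized) DFF algorithm 𝒜, the expected worst-case mistake count against an adaptive adversary satisfies M^L_k(𝒜, 𝒯^{d+1}, H_•) ≥ (k+1)d − 1. -/
open scoped Classical

/-- A teacher over examples `X`, labels `Y` and Boolean features `Φ`:
a labeling function together with a feature-feedback function that, whenever
two examples receive different labels, returns a feature of `Φ` satisfied by
the first example and not by the second. -/
structure Teacher (X Y : Type) (Φ : Set (X → Bool)) where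
  label : X → Y
  feedback : X → X → Option (X → Bool)
  feedback_spec : ∀ x xh : X, label x ≠ label xh →
    ∃ φ ∈ Φ, feedback x xh = some φ ∧ φ x = true ∧ φ xh = false

/-- A teacher is consistent with a history `H` of labeled examples. -/
def ConsistentH {X Y : Type} {Φ : Set (X → Bool)} (T : Teacher X Y Φ)
    (H : Set (X × Y)) : Prop :=
  ∀ p ∈ H, T.label p.1 = p.2

/-- Restriction of a teacher class by one round of DFF interaction: the
teachers that label `x` with `y` and give feature feedback `φ` on `(x, xh)`. -/
def TRestrict {X Y : Type} {Φ : Set (X → Bool)} (𝒯 : Set (Teacher X Y Φ))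
    (x xh : X) (y : Y) (φ : X → Bool) : Set (Teacher X Y Φ) :=
  {T | T ∈ 𝒯 ∧ T.label x = y ∧ T.feedback x xh = some φ}

/-- `ShatteredDFFT Φ 𝒯 H d` holds iff there is a DFF tree of height `d`
shattered by the teacher class `𝒯` and the history `H`: at a leaf, some
teacher of the current class is consistent with the accumulated history
(i.e. every root-to-leaf path of the tree is consistent with some teacher of
the original class that is consistent with the original history); at an inner
node a next example `x` is presented, and for every available explanation
pair `(xh, yh)` (an element of the history or a labeled example revealed
along the path, all of which are accumulated in `H`) there is teacher
feedback `(y, φ)` with `y ≠ yh` and `φ ∈ Φ` leading to a shattered subtree of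
height `d` for the correspondingly restricted class and extended history. -/
inductive ShatteredDFFT {X Y : Type} (Φ : Set (X → Bool)) :
    Set (Teacher X Y Φ) → Set (X × Y) → ℕ → Prop
  | leaf (𝒯 : Set (Teacher X Y Φ)) (H : Set (X × Y))
      (h : ∃ T ∈ 𝒯, ConsistentH T H) : ShatteredDFFT Φ 𝒯 H 0
  | node (𝒯 : Set (Teacher X Y Φ)) (H : Set (X × Y)) (d : ℕ) (x : X)
      (y : X × Y → Y) (φ : X × Y → (X → Bool))
      (hne : ∀ p ∈ H, y p ≠ p.2) (hΦ : ∀ p ∈ H, φ p ∈ Φ)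
      (h : ∀ p ∈ H,
        ShatteredDFFT Φ (TRestrict 𝒯 x p.1 (y p) (φ p)) (insert (x, y p) H) d) :
      ShatteredDFFT Φ 𝒯 H (d + 1)

/-- The DFF dimension of a teacher class `𝒯` with history `H`: the maximal
height of a DFF tree shattered by `𝒯` and `H` (possibly infinite). -/
noncomputable def DFFdim {X Y : Type} (Φ : Set (X → Bool))
    (𝒯 : Set (Teacher X Y Φ)) (H : Set (X × Y)) : ℕ∞ :=
  sSup {d : ℕ∞ | ∃ n : ℕ, d = n ∧ ShatteredDFFT Φ 𝒯 H n}

/-- A transcript of the (possibly non-realizable) DFF protocol: each entry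
records the presented example `x`, the explanation `xh` and prediction `yh`
output by the learner, and, on a mistake round, the revealed label and
feature `(y, φ)` (with `y ≠ yh`); on a correct round the feedback is `none`. -/
abbrev ATranscript (X Y : Type) : Type :=
  List (X × X × Y × Option (Y × (X → Bool)))

/-- The labeled examples revealed by a transcript: on a correct round the
prediction is revealed to be the label, and on a mistake round the label is
revealed by the feedback. -/
def revealedA {X Y : Type} (tr : ATranscript X Y) : Set (X × Y) :=
  {p | ∃ e ∈ tr, e.1 = p.1 ∧
    ((e.2.2.2 = none ∧ e.2.2.1 = p.2) ∨ ∃ φ, e.2.2.2 = some (p.2, φ))}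

/-- The number of mistake rounds of a transcript. -/
def mistakesA {X Y : Type} (tr : ATranscript X Y) : ℕ :=
  tr.countP fun e => e.2.2.2.isSome

/-- Consistency of a single round with a teacher: on a correct round the
teacher labels the example by the prediction; on a mistake round the revealed
label and feature are those given by the teacher. -/
def RoundCons {X Y : Type} {Φ : Set (X → Bool)} (T : Teacher X Y Φ)
    (e : X × X × Y × Option (Y × (X → Bool))) : Prop :=
  match e.2.2.2 with
  | none => T.label e.1 = e.2.2.1
  | some (y, φ) => T.label e.1 = y ∧ T.feedback e.1 e.2.1 = some φ

/-- A transcript of length `L` is `k`-consistent with `(𝒯, H)` if some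
teacher of `𝒯` consistent with `H` is consistent with every round outside a
set of at most `k` exception rounds. -/
def kConsistent {X Y : Type} {Φ : Set (X → Bool)} (𝒯 : Set (Teacher X Y Φ))
    (H : Set (X × Y)) (k : ℕ) (tr : ATranscript X Y) : Prop :=
  ∃ T ∈ 𝒯, ConsistentH T H ∧ ∃ E : Finset ℕ, E.card ≤ k ∧
    ∀ (t : ℕ) (h : t < tr.length), t ∉ E → RoundCons T (tr.get ⟨t, h⟩)

open scoped ENNReal
/-- A randomized DFF algorithm: given the transcript so far and the next
example, a probability distribution over pairs of an explanation and a
predicted label. -/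
abbrev RandAlg (X Y : Type) : Type := ATranscript X Y → X → PMF (X × Y)

/-- An adaptive adversary: as a function of the transcript so far, choose
the next example, its revealed label, and the feature-feedback function to
be used on this round. -/
abbrev Adversary (X Y : Type) : Type :=
  ATranscript X Y → X × Y × (X → X → (X → Bool))

/-- The distribution over `n`-round transcripts generated by the interaction
of a randomized algorithm `A` with an adaptive adversary `adv`: in each round
the adversary picks `(x, y, ψ)` from the transcript so far, the algorithm
samples `(xh, yh)`, and on a mistake (`yh ≠ y`) the feedback `(y, ψ x xh)` is
appended. -/
noncomputable def runPMF {X Y : Type} (A : RandAlg X Y) (adv : Adversary X Y) :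
    ℕ → PMF (ATranscript X Y)
  | 0 => PMF.pure []
  | n + 1 => (runPMF A adv n).bind fun tr =>
      (A tr (adv tr).1).bind fun p =>
        PMF.pure (tr ++ [((adv tr).1, p.1, p.2,
          if p.2 = (adv tr).2.1 then none
          else some ((adv tr).2.1, (adv tr).2.2 (adv tr).1 p.1))])

/-- The expected number of mistakes of the randomized algorithm `A` against
the adaptive adversary `adv` over `L` rounds. -/
noncomputable def expMistakes {X Y : Type} (A : RandAlg X Y)
    (adv : Adversary X Y) (L : ℕ) : ℝ≥0∞ :=
  ∑' tr : ATranscript X Y, runPMF A adv L tr * (mistakesA tr : ℝ≥0∞)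

/-- A randomized algorithm is legal for history `H` if, with probability one,
the pair it outputs is an element of `H` or a previously revealed labeled
example. -/
def LegalRand {X Y : Type} (A : RandAlg X Y) (H : Set (X × Y)) : Prop :=
  ∀ (tr : ATranscript X Y) (x : X), ∀ p ∈ (A tr x).support,
    p ∈ H ∪ revealedA tr

/-- The expected worst-case number of mistakes of a randomized algorithm in
the `k`-non-realizable setting over `L` rounds: the supremum of the expected
number of mistakes over all adaptive adversaries that, with probability one,
generate transcripts `k`-consistent with some teacher of `𝒯` consistent with
`H`. -/
noncomputable def MLk {X Y : Type} {Φ : Set (X → Bool)} (A : RandAlg X Y)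
    (𝒯 : Set (Teacher X Y Φ)) (H : Set (X × Y)) (k L : ℕ) : ℝ≥0∞ :=
  ⨆ adv ∈ {adv : Adversary X Y |
      ∀ tr ∈ (runPMF A adv L).support, kConsistent 𝒯 H k tr},
    expMistakes A adv L

/-- The block `X_i = {2^i, …, 2^{i+1} − 1}` of the secret-sharing
construction. -/
def XiSS (i : ℕ) : Set ℕ := Set.Ico (2 ^ i) (2 ^ (i + 1))

/-- The labeling functions of the secret-sharing construction on block `i`:
all `f : ℕ → {0,1}` with `f 1 = 1` and `f x = 0` outside `X_i ∪ {1}`. -/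
def FdiSS (i : ℕ) : Set (ℕ → Bool) :=
  {f | f 1 = true ∧ ∀ x : ℕ, x ∉ XiSS i → x ≠ 1 → f x = false}

/-- The constant term (the secret) of a coefficient vector of a
degree-`(d−1)` secret-sharing polynomial. -/
noncomputable def constTerm {d p : ℕ} (c : Fin d → ZMod p) : ZMod p :=
  ∑ j : Fin d, c j * (0 : ZMod p) ^ (j : ℕ)

/-- The shifted secret-sharing polynomial
`P[c̄](x) = 2^{i+1} + ((Σ_j c_j (x − 2^i + 1)^j) mod p)`. -/
noncomputable def PpolySS (d i p : ℕ) (c : Fin d → ZMod p) (x : ℕ) : ℕ :=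
  2 ^ (i + 1) + (∑ j : Fin d, c j * ((x - 2 ^ i + 1 : ℕ) : ZMod p) ^ (j : ℕ)).val

/-- The indicator feature of a pair of natural numbers. -/
noncomputable def ind2 (a b : ℕ) : ℕ → Bool := fun z => decide (z = a ∨ z = b)

/-- The indicator feature of a single natural number. -/
noncomputable def ind1 (a : ℕ) : ℕ → Bool := fun z => decide (z = a)

/-- The feature-feedback function `ψ^f_ā` of the secret-sharing construction:
on a pair of examples in `X_i` it reveals, besides `x` itself, one evaluation
of the secret-sharing polynomial with coefficients `ā(xh, f(x))`; otherwise
it is the indicator of `x`. -/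
noncomputable def psiSS (d i p : ℕ) (a : ℕ → Bool → Fin d → ZMod p)
    (f : ℕ → Bool) : ℕ → ℕ → Option (ℕ → Bool) :=
  fun x xh =>
    if x ∈ XiSS i ∧ xh ∈ XiSS i then some (ind2 x (PpolySS d i p (a xh (f x)) x))
    else some (ind1 x)

/-- The teacher class `𝒯^d_i` of the secret-sharing construction with
parameter `d`, block `i`, prime `p` and secret-encoding `b`: teachers with a
labeling function `f ∈ F^d_i` and feedback `ψ^f_ā` where, for every `xh ∈ X_i`
with `f xh = 1`, the secret of `ā(xh, 0)` is `b f`. -/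
noncomputable def TdISS (d i p : ℕ) (b : (ℕ → Bool) → ZMod p) :
    Set (Teacher ℕ Bool (Set.univ : Set (ℕ → Bool))) :=
  {T | ∃ f ∈ FdiSS i, ∃ a : ℕ → Bool → Fin d → ZMod p,
    (∀ xh ∈ XiSS i, f xh = true → constTerm (a xh false) = b f) ∧
    T.label = f ∧ T.feedback = psiSS d i p a f}

/-- The teacher class `𝒯^{d+1} = ⋃_i 𝒯^d_i` of the secret-sharing
construction. -/
noncomputable def TfullSS (d : ℕ) (p : ℕ → ℕ)
    (b : ∀ i : ℕ, (ℕ → Bool) → ZMod (p i)) :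
    Set (Teacher ℕ Bool (Set.univ : Set (ℕ → Bool))) :=
  ⋃ i : ℕ, TdISS d i (p i) (b i)

/-- The history `H_• = {(2, 0), (1, 1)}`. -/
def HbulSS : Set (ℕ × Bool) := {((2 : ℕ), false), ((1 : ℕ), true)}

namespace SSLB


/-! ### The potential function `Hn` and its arithmetic -/

def Hn (n r : ℕ) : ℕ := ∑ j ∈ Finset.range (n+1), n.choose j * min r (16*j)

lemma pascalSum {R : Type*} [CommSemiring R] (n : ℕ) (m : ℕ → R) :
    ∑ j ∈ Finset.range (n+2), ((n+1).choose j : R) * m j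
      = ∑ j ∈ Finset.range (n+1), (n.choose j : R) * (m j + m (j+1)) := by
  have h1 : ∑ j ∈ Finset.range (n+2), ((n+1).choose j : R) * m j
      = (∑ j ∈ Finset.range (n+1), ((n+1).choose (j+1) : R) * m (j+1)) + (1:R) * m 0 := by
    rw [Finset.sum_range_succ' (fun j => ((n+1).choose j : R) * m j) (n+1)]
    norm_num
  have h2 : ∀ j, ((n+1).choose (j+1) : R) = (n.choose j : R) + (n.choose (j+1) : R) := by
    intro j
    rw [Nat.choose_succ_succ, Nat.cast_add]
  have h4 : ∑ j ∈ Finset.range (n+2), (n.choose j : R) * m j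
      = (∑ j ∈ Finset.range (n+1), (n.choose (j+1) : R) * m (j+1)) + (1:R) * m 0 := by
    rw [Finset.sum_range_succ' (fun j => (n.choose j : R) * m j) (n+1)]
    norm_num
  have h5 : ∑ j ∈ Finset.range (n+2), (n.choose j : R) * m j
      = ∑ j ∈ Finset.range (n+1), (n.choose j : R) * m j := by
    rw [Finset.sum_range_succ]
    simp [Nat.choose_succ_self]
  have h3 : ∑ j ∈ Finset.range (n+1), (n.choose (j+1) : R) * m (j+1) + (1:R) * m 0
      = ∑ j ∈ Finset.range (n+1), (n.choose j : R) * m j := by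
    rw [← h4, h5]
  calc ∑ j ∈ Finset.range (n+2), ((n+1).choose j : R) * m j
      = (∑ j ∈ Finset.range (n+1), ((n.choose j : R) + (n.choose (j+1) : R)) * m (j+1)) + (1:R) * m 0 := by
        rw [h1]; congr 1; exact Finset.sum_congr rfl (fun j _ => by rw [h2])
    _ = (∑ j ∈ Finset.range (n+1), (n.choose j : R) * m (j+1))
        + ((∑ j ∈ Finset.range (n+1), (n.choose (j+1) : R) * m (j+1)) + (1:R) * m 0) := by
        have : ∑ j ∈ Finset.range (n+1), ((n.choose j : R) + (n.choose (j+1) : R)) * m (j+1)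
            = (∑ j ∈ Finset.range (n+1), (n.choose j : R) * m (j+1))
              + ∑ j ∈ Finset.range (n+1), (n.choose (j+1) : R) * m (j+1) := by
          rw [← Finset.sum_add_distrib]
          exact Finset.sum_congr rfl (fun j _ => add_mul _ _ _)
        rw [this, add_assoc]
    _ = (∑ j ∈ Finset.range (n+1), (n.choose j : R) * m (j+1))
        + ∑ j ∈ Finset.range (n+1), (n.choose j : R) * m j := by rw [h3]
    _ = ∑ j ∈ Finset.range (n+1), (n.choose j : R) * (m j + m (j+1)) := by
        rw [← Finset.sum_add_distrib]
        exact Finset.sum_congr rfl (fun j _ => by ring)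

lemma pascalSumNat (n : ℕ) (m : ℕ → ℕ) :
    ∑ j ∈ Finset.range (n+2), (n+1).choose j * m j
      = ∑ j ∈ Finset.range (n+1), n.choose j * (m j + m (j+1)) := by
  have := pascalSum (R := ℕ) n m
  simpa using this

lemma Hn_succ (n r : ℕ) :
    Hn (n+1) r = Hn n r + ∑ j ∈ Finset.range (n+1), n.choose j * min r (16*(j+1)) := by
  unfold Hn
  rw [pascalSumNat n (fun j => min r (16*j))]
  rw [show (∑ j ∈ Finset.range (n+1), n.choose j * min r (16*j))
      + ∑ j ∈ Finset.range (n+1), n.choose j * min r (16*(j+1))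
      = ∑ j ∈ Finset.range (n+1), (n.choose j * min r (16*j) + n.choose j * min r (16*(j+1)))
    from (Finset.sum_add_distrib).symm]
  exact Finset.sum_congr rfl (fun j _ => (Nat.mul_add _ _ _))

lemma Hn_mono (n : ℕ) {r r' : ℕ} (h : r ≤ r') : Hn n r ≤ Hn n r' :=
  Finset.sum_le_sum (fun j _ => Nat.mul_le_mul_left _ (by omega))

lemma Hn_zero_r (n : ℕ) : Hn n 0 = 0 := by unfold Hn; simp

lemma Hn_zero (r : ℕ) : Hn 0 r = 0 := by unfold Hn; simp

lemma Hn_lip (n r : ℕ) : Hn n r ≤ Hn n (r - 16) + 16 * 2^n := by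
  unfold Hn
  calc ∑ j ∈ Finset.range (n+1), n.choose j * min r (16*j)
      ≤ ∑ j ∈ Finset.range (n+1), (n.choose j * min (r-16) (16*j) + n.choose j * 16) := by
        refine Finset.sum_le_sum (fun j _ => ?_)
        rw [← Nat.mul_add]
        exact Nat.mul_le_mul_left _ (by omega)
    _ = Hn n (r-16) + 16 * 2^n := by
        rw [Finset.sum_add_distrib]
        unfold Hn
        congr 1
        rw [← Finset.sum_mul, Nat.sum_range_choose]
        ring

lemma Hn_L1 (n r : ℕ) : Hn (n+1) r ≤ 16 * 2^n + Hn n (r - 16) + Hn n r := by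
  rw [Hn_succ]
  have h : ∑ j ∈ Finset.range (n+1), n.choose j * min r (16*(j+1))
      ≤ ∑ j ∈ Finset.range (n+1), (n.choose j * min (r-16) (16*j) + n.choose j * 16) := by
    refine Finset.sum_le_sum (fun j _ => ?_)
    rw [← Nat.mul_add]
    exact Nat.mul_le_mul_left _ (by omega)
  rw [Finset.sum_add_distrib, ← Finset.sum_mul, Nat.sum_range_choose] at h
  have h2 : (∑ j ∈ Finset.range (n+1), n.choose j * min (r-16) (16*j)) = Hn n (r-16) := rfl
  omega

lemma Hn_L2 (n r : ℕ) : Hn (n+1) r ≤ 16 * 2^n + 2 * Hn n (r - 8) := by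
  rw [Hn_succ]
  have key : ∀ j : ℕ, min r (16*j) + min r (16*(j+1)) ≤ 16 + 2 * min (r-8) (16*j) := by
    intro j; omega
  have h : Hn n r + ∑ j ∈ Finset.range (n+1), n.choose j * min r (16*(j+1))
      ≤ ∑ j ∈ Finset.range (n+1), (n.choose j * 16 + n.choose j * (2 * min (r-8) (16*j))) := by
    unfold Hn
    rw [← Finset.sum_add_distrib]
    refine Finset.sum_le_sum (fun j _ => ?_)
    rw [← Nat.mul_add, ← Nat.mul_add]
    exact Nat.mul_le_mul_left _ (key j)
  rw [Finset.sum_add_distrib, ← Finset.sum_mul, Nat.sum_range_choose] at h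
  have h2 : ∑ j ∈ Finset.range (n+1), n.choose j * (2 * min (r-8) (16*j))
      = 2 * Hn n (r-8) := by
    unfold Hn
    rw [Finset.mul_sum]
    exact Finset.sum_congr rfl (fun j _ => by ring)
  omega

lemma binom_second_moment (n : ℕ) :
    ∑ j ∈ Finset.range (n+1), (n.choose j : ℤ) * ((n:ℤ) - 2*j)^2 = (n:ℤ) * 2^n := by
  induction n with
  | zero => simp
  | succ n ih =>
    have hp := pascalSum (R := ℤ) n (fun j => (((n:ℤ)+1) - 2*(j:ℤ))^2)
    have hchoose : (∑ j ∈ Finset.range (n+1), (n.choose j : ℤ)) = 2^n := by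
      have := Nat.sum_range_choose n
      exact_mod_cast congrArg (Nat.cast : ℕ → ℤ) this
    push_cast
    rw [hp]
    have h2 : ∀ j : ℕ, (((n:ℤ)+1) - 2*(j:ℤ))^2 + (((n:ℤ)+1) - 2*((j:ℤ)+1))^2
        = 2*((n:ℤ) - 2*j)^2 + 2 := by intro j; ring
    calc ∑ j ∈ Finset.range (n+1), (n.choose j : ℤ) * ((((n:ℤ)+1) - 2*(j:ℤ))^2 + (((n:ℤ)+1) - 2*((j:ℤ)+1))^2)
        = ∑ j ∈ Finset.range (n+1), ((n.choose j : ℤ) * (2*((n:ℤ) - 2*j)^2) + (n.choose j : ℤ) * 2) := by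
          refine Finset.sum_congr rfl (fun j _ => ?_)
          rw [show ((j:ℤ)+1) = ((j:ℤ)+1) from rfl, h2 j]
          ring
      _ = 2 * (∑ j ∈ Finset.range (n+1), (n.choose j : ℤ) * ((n:ℤ) - 2*j)^2)
          + 2 * ∑ j ∈ Finset.range (n+1), (n.choose j : ℤ) := by
          rw [Finset.sum_add_distrib, Finset.mul_sum, Finset.mul_sum]
          congr 1
          · exact Finset.sum_congr rfl (fun j _ => by ring)
          · exact Finset.sum_congr rfl (fun j _ => by ring)
      _ = ((n:ℤ)+1) * 2^(n+1) := by
          rw [ih, hchoose]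
          ring

lemma Hn_final (k d L : ℕ) (hk : 1 ≤ k) (hd : 1 ≤ d) (hL : 4*(k+1)*d ≤ L) :
    16 * ((k+1)*d - 1) * 2^L ≤ Hn L (16*((k+1)*d - 1) + 8*k) := by
  set B := (k+1)*d - 1 with hB
  set r0 := 16*B + 8*k with hr0
  set S := ∑ j ∈ Finset.range (L+1), L.choose j * (r0 - 16*j) with hS
  have hkd1 : 1 ≤ (k+1)*d := Nat.mul_pos (by omega) hd
  have hL' : 4*((k+1)*d) ≤ L := by rw [← mul_assoc]; exact hL
  have hLB : 4*B + 4 ≤ L := by omega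
  have hkB : k ≤ B := by
    have : k+1 ≤ (k+1)*d := Nat.le_mul_of_pos_right _ hd
    omega
  have step1 : r0 * 2^L ≤ Hn L r0 + S := by
    have h0 : r0 * 2^L = ∑ j ∈ Finset.range (L+1), L.choose j * r0 := by
      rw [← Finset.sum_mul, Nat.sum_range_choose]; ring
    rw [h0, hS]
    unfold Hn
    rw [← Finset.sum_add_distrib]
    refine Finset.sum_le_sum (fun j _ => ?_)
    rw [← Nat.mul_add]
    exact Nat.mul_le_mul_left _ (by omega)
  set μ := 8*L - r0 with hμ
  have hμpos : r0 + 2*L ≤ 8*L := by omega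
  have step2 : S ≤ 8*k*2^L := by
    have key : (4*μ) * S ≤ 64 * L * 2^L := by
      have hcastS : ((4*μ) * S : ℤ) = ∑ j ∈ Finset.range (L+1),
          (4*(μ:ℤ)) * ((L.choose j : ℤ) * ((r0 - 16*j : ℕ) : ℤ)) := by
        rw [hS]
        push_cast
        rw [Finset.mul_sum]
      have h1 : ((4*μ) * S : ℤ) ≤ ∑ j ∈ Finset.range (L+1),
          (L.choose j : ℤ) * ((8*(L:ℤ) - 16*(j:ℤ))^2) := by
        rw [hcastS]
        refine Finset.sum_le_sum (fun j _ => ?_)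
        have hnn : (0:ℤ) ≤ (L.choose j : ℤ) := by positivity
        rcases le_or_gt (16*j) r0 with hc | hc
        · have hcast : ((r0 - 16*j : ℕ) : ℤ) = (r0:ℤ) - 16*(j:ℤ) := by omega
          have h8 : (8*(L:ℤ) - 16*(j:ℤ)) = (μ:ℤ) + ((r0:ℤ) - 16*(j:ℤ)) := by omega
          rw [hcast, h8]
          have hsq : (4*(μ:ℤ)) * ((r0:ℤ) - 16*(j:ℤ)) ≤ ((μ:ℤ) + ((r0:ℤ) - 16*(j:ℤ)))^2 := by
            nlinarith [sq_nonneg ((μ:ℤ) - ((r0:ℤ) - 16*(j:ℤ)))]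
          calc (4*(μ:ℤ)) * ((L.choose j : ℤ) * ((r0:ℤ) - 16*(j:ℤ)))
              = (L.choose j : ℤ) * ((4*(μ:ℤ)) * ((r0:ℤ) - 16*(j:ℤ))) := by ring
            _ ≤ (L.choose j : ℤ) * (((μ:ℤ) + ((r0:ℤ) - 16*(j:ℤ)))^2) :=
                mul_le_mul_of_nonneg_left hsq hnn
        · have hcast : ((r0 - 16*j : ℕ) : ℤ) = 0 := by omega
          rw [hcast]
          nlinarith [sq_nonneg (8*(L:ℤ) - 16*(j:ℤ)), hnn]
      have h2 : ∑ j ∈ Finset.range (L+1), (L.choose j : ℤ) * ((8*(L:ℤ) - 16*(j:ℤ))^2)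
          = 64 * (L:ℤ) * 2^L := by
        have e1 : ∀ j:ℕ, (L.choose j:ℤ) * ((8*(L:ℤ) - 16*(j:ℤ))^2)
            = 64 * ((L.choose j:ℤ) * (((L:ℤ) - 2*(j:ℤ))^2)) := fun j => by ring
        rw [Finset.sum_congr rfl (fun j _ => e1 j), ← Finset.mul_sum, binom_second_moment]
        ring
      have h3 := h1.trans (le_of_eq h2)
      exact_mod_cast h3
    have key2 : 64 * L * 2^L ≤ (4*μ) * (8*k*2^L) := by
      have hkμ : 2*L ≤ k*μ := by
        have h1 : 2*L ≤ μ := by omega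
        calc 2*L ≤ μ := h1
          _ ≤ k*μ := Nat.le_mul_of_pos_left μ (by omega)
      calc 64 * L * 2^L = (4 * (8 * (2*L))) * 2^L := by ring
        _ ≤ (4 * (8 * (k*μ))) * 2^L := by
            have : 4 * (8 * (2*L)) ≤ 4 * (8 * (k*μ)) := by omega
            exact Nat.mul_le_mul_right _ this
        _ = (4*μ) * (8*k*2^L) := by ring
    have hμ0 : 0 < 4*μ := by omega
    exact Nat.le_of_mul_le_mul_left (key.trans key2) hμ0
  have hsplit : r0 * 2^L = 16*B*2^L + 8*k*2^L := by rw [hr0]; ring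
  omega


/-! ### The adversary and transcript bookkeeping -/

abbrev Entry : Type := ℕ × ℕ × Bool × Option (Bool × (ℕ → Bool))

/-- The label revealed by an entry. -/
def labE (e : Entry) : Bool :=
  match e.2.2.2 with
  | some yφ => yφ.1
  | none => e.2.2.1

/-- Whether an entry is a mistake with revealed label `false`. -/
def isBadE (e : Entry) : Bool :=
  match e.2.2.2 with
  | some (false, _) => true
  | _ => false

/-- Number of bad (false-label) mistakes with explanation `z`. -/
def uC (z : ℕ) (tr : ATranscript ℕ Bool) : ℕ :=
  tr.countP (fun e => isBadE e && decide (e.2.1 = z))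

/-- Number of rounds with revealed label `true`. -/
def sC (tr : ATranscript ℕ Bool) : ℕ := tr.countP (fun e => labE e)

/-- Capped count of bad mistakes, per explanation slot. -/
def bC (d L : ℕ) (tr : ATranscript ℕ Bool) : ℕ :=
  ∑ z ∈ Finset.Ico (2^(L+2)) (2^(L+3)), min (uC z tr) d

/-- The mistake budget `B = (k+1)d - 1`. -/
def BB (k d : ℕ) : ℕ := (k+1)*d - 1

/-- Fresh example presented at the current round. -/
def xF (L : ℕ) (tr : ATranscript ℕ Bool) : ℕ := 2^(L+2) + tr.length

/-- Feature feedback used by the adversary. -/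
noncomputable def psiA (L : ℕ) : ℕ → ℕ → (ℕ → Bool) := fun x xh =>
  if x ∈ XiSS (L+2) ∧ xh ∈ XiSS (L+2) then ind2 x (2^(L+3)) else ind1 x

/-- Probability that the algorithm predicts `true`. -/
noncomputable def alphaP (A : RandAlg ℕ Bool) (L : ℕ) (tr : ATranscript ℕ Bool) : ℝ≥0∞ :=
  ∑' m : ℕ, A tr (xF L tr) (m, true)

/-- The adversary: present a fresh example of the block `X_{L+2}`; label it
`false` when the algorithm is at least as likely to predict `true` and the
bad-mistake budget is not exhausted, and `true` otherwise. -/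
noncomputable def advS (k d L : ℕ) (A : RandAlg ℕ Bool) : Adversary ℕ Bool :=
  fun tr => (xF L tr,
    (if bC d L tr < BB k d ∧ (2:ℝ≥0∞)⁻¹ ≤ alphaP A L tr then false else true),
    psiA L)

/-- The entry appended to the transcript in one round. -/
noncomputable def entS (k d L : ℕ) (A : RandAlg ℕ Bool) (tr : ATranscript ℕ Bool)
    (q : ℕ × Bool) : Entry :=
  ((advS k d L A tr).1, q.1, q.2,
    @ite _ (q.2 = (advS k d L A tr).2.1) (Classical.propDecidable _) none
    (some ((advS k d L A tr).2.1, (advS k d L A tr).2.2 (advS k d L A tr).1 q.1)))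

/-- Remaining potential. -/
def rP (k d L : ℕ) (tr : ATranscript ℕ Bool) : ℕ :=
  16 * (BB k d - bC d L tr) + 8 * (k - sC tr)

/-- The structural invariant of transcripts generated by the adversary. -/
def GoodT (k d L : ℕ) (A : RandAlg ℕ Bool) (tr : ATranscript ℕ Bool) : Prop :=
  ∀ (t : ℕ) (ht : t < tr.length),
    (tr.get ⟨t, ht⟩).1 = 2^(L+2) + t ∧
    (((tr.get ⟨t, ht⟩).2.2.1 = (advS k d L A (tr.take t)).2.1 ∧
        (tr.get ⟨t, ht⟩).2.2.2 = none) ∨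
     ((tr.get ⟨t, ht⟩).2.2.1 ≠ (advS k d L A (tr.take t)).2.1 ∧
        (tr.get ⟨t, ht⟩).2.2.2 = some ((advS k d L A (tr.take t)).2.1,
          psiA L (tr.get ⟨t, ht⟩).1 (tr.get ⟨t, ht⟩).2.1))) ∧
    ((tr.get ⟨t, ht⟩).2.1, (tr.get ⟨t, ht⟩).2.2.1) ∈ HbulSS ∪ revealedA (tr.take t)

/-! ### Counting lemmas -/

lemma countP_app (p : Entry → Bool) (tr : ATranscript ℕ Bool) (e : Entry) :
    (tr ++ [e]).countP p = tr.countP p + (if p e then 1 else 0) := by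
  rw [List.countP_append]
  simp [List.countP_cons]

lemma mist_app (tr : ATranscript ℕ Bool) (e : Entry) :
    mistakesA (tr ++ [e]) = mistakesA tr + (if e.2.2.2.isSome then 1 else 0) := by
  unfold mistakesA
  rw [countP_app]

lemma sC_app (tr : ATranscript ℕ Bool) (e : Entry) :
    sC (tr ++ [e]) = sC tr + (if labE e then 1 else 0) := by
  unfold sC
  rw [countP_app]

lemma uC_app (z : ℕ) (tr : ATranscript ℕ Bool) (e : Entry) :
    uC z (tr ++ [e]) = uC z tr + (if isBadE e && decide (e.2.1 = z) then 1 else 0) := by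
  unfold uC
  rw [countP_app]

lemma bC_app_le (d L : ℕ) (tr : ATranscript ℕ Bool) (e : Entry) :
    bC d L (tr ++ [e]) ≤ bC d L tr + 1 := by
  unfold bC
  have h1 : ∀ z ∈ Finset.Ico (2^(L+2)) (2^(L+3)),
      min (uC z (tr ++ [e])) d ≤ min (uC z tr) d + (if e.2.1 = z then 1 else 0) := by
    intro z _
    rw [uC_app]
    have h2 : (if isBadE e && decide (e.2.1 = z) then 1 else 0)
        ≤ (if e.2.1 = z then 1 else 0) := by
      by_cases h : e.2.1 = z <;> by_cases hb : isBadE e <;> simp [h, hb]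
    omega
  calc ∑ z ∈ Finset.Ico (2^(L+2)) (2^(L+3)), min (uC z (tr ++ [e])) d
      ≤ ∑ z ∈ Finset.Ico (2^(L+2)) (2^(L+3)),
          (min (uC z tr) d + (if e.2.1 = z then 1 else 0)) := Finset.sum_le_sum h1
    _ = (∑ z ∈ Finset.Ico (2^(L+2)) (2^(L+3)), min (uC z tr) d)
        + ∑ z ∈ Finset.Ico (2^(L+2)) (2^(L+3)), (if e.2.1 = z then 1 else 0) :=
        Finset.sum_add_distrib
    _ ≤ (∑ z ∈ Finset.Ico (2^(L+2)) (2^(L+3)), min (uC z tr) d) + 1 := by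
        have := Finset.sum_ite_eq (Finset.Ico (2^(L+2)) (2^(L+3))) e.2.1 (fun _ => 1)
        rw [this]
        split <;> omega

lemma bC_app_eq (d L : ℕ) (tr : ATranscript ℕ Bool) (e : Entry) (h : isBadE e = false) :
    bC d L (tr ++ [e]) = bC d L tr := by
  unfold bC
  refine Finset.sum_congr rfl (fun z _ => ?_)
  rw [uC_app]
  simp [h]

/-! ### Invariant along prefixes and the budget bound -/

lemma good_take (k d L : ℕ) (A : RandAlg ℕ Bool) (tr : ATranscript ℕ Bool)
    (hG : GoodT k d L A tr) (j : ℕ) : GoodT k d L A (tr.take j) := by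
  intro t ht
  have htlen : t < tr.length := by
    simp only [List.length_take] at ht
    omega
  have hget : (tr.take j).get ⟨t, ht⟩ = tr.get ⟨t, htlen⟩ := by
    simp [List.getElem_take]
  have htake : (tr.take j).take t = tr.take t := by
    rw [List.take_take]
    congr 1
    simp only [List.length_take] at ht
    omega
  rw [hget, htake]
  exact hG t htlen

lemma take_succ_eq (tr : ATranscript ℕ Bool) (j : ℕ) (hj : j < tr.length) :
    tr.take (j+1) = tr.take j ++ [tr.get ⟨j, hj⟩] := by
  rw [List.take_succ]
  simp [List.getElem?_eq_getElem hj]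

lemma lab_of_ent (e : Entry) (yA : Bool) (ψ : ℕ → Bool)
    (h2 : (e.2.2.1 = yA ∧ e.2.2.2 = none) ∨
      (e.2.2.1 ≠ yA ∧ e.2.2.2 = some (yA, ψ))) : labE e = yA := by
  unfold labE
  rcases h2 with ⟨h, hn⟩ | ⟨h, hs⟩
  · rw [hn]; exact h
  · rw [hs]

lemma isBad_of_ent (e : Entry) (yA : Bool) (ψ : ℕ → Bool)
    (h2 : (e.2.2.1 = yA ∧ e.2.2.2 = none) ∨
      (e.2.2.1 ≠ yA ∧ e.2.2.2 = some (yA, ψ))) :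
    isBadE e = true ↔ (e.2.2.1 = true ∧ yA = false) := by
  unfold isBadE
  rcases h2 with ⟨h, hn⟩ | ⟨h, hs⟩
  · rw [hn]
    simp only [Bool.false_eq_true]
    constructor
    · intro hc; exact absurd hc (by simp)
    · rintro ⟨h1, h2⟩; rw [h1, h2] at h; exact absurd h (by simp)
  · rw [hs]
    cases yA
    · constructor
      · intro _
        constructor
        · rcases Bool.eq_false_or_eq_true e.2.2.1 with hb | hb
          · exact hb
          · exact absurd hb h
        · rfl
      · intro _; rfl
    · constructor
      · intro hc; exact absurd hc (by simp)
      · rintro ⟨h1, h2⟩; exact absurd h2 (by simp)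

lemma isSome_of_ent (e : Entry) (yA : Bool) (ψ : ℕ → Bool)
    (h2 : (e.2.2.1 = yA ∧ e.2.2.2 = none) ∨
      (e.2.2.1 ≠ yA ∧ e.2.2.2 = some (yA, ψ))) :
    e.2.2.2.isSome = true ↔ ¬(e.2.2.1 = yA) := by
  rcases h2 with ⟨h, hn⟩ | ⟨h, hs⟩ <;> rw [show e.2.2.2 = _ from by assumption] <;> simp [h]

lemma adv_label_false (k d L : ℕ) (A : RandAlg ℕ Bool) (tr : ATranscript ℕ Bool)
    (hy : (advS k d L A tr).2.1 = false) :
    bC d L tr < BB k d ∧ (2:ℝ≥0∞)⁻¹ ≤ alphaP A L tr := by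
  by_cases hC : bC d L tr < BB k d ∧ (2:ℝ≥0∞)⁻¹ ≤ alphaP A L tr
  · exact hC
  · exfalso
    unfold advS at hy
    simp only [if_neg hC] at hy
    exact absurd hy (by simp)

lemma bC_le (k d L : ℕ) (A : RandAlg ℕ Bool) (tr : ATranscript ℕ Bool)
    (hG : GoodT k d L A tr) : bC d L tr ≤ BB k d := by
  suffices h : ∀ j, j ≤ tr.length → bC d L (tr.take j) ≤ BB k d by
    have h2 := h tr.length le_rfl
    rwa [List.take_length] at h2
  intro j
  induction j with
  | zero =>
    intro _
    simp [bC, uC]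
  | succ j ih =>
    intro hj
    have hjl : j < tr.length := hj
    have htake := take_succ_eq tr j hjl
    rcases Bool.eq_false_or_eq_true (isBadE (tr.get ⟨j, hjl⟩)) with hb | hb
    swap
    · rw [htake, bC_app_eq d L _ _ hb]
      exact ih (le_of_lt hjl)
    · obtain ⟨h1, h2, h3⟩ := hG j hjl
      have hy : (advS k d L A (tr.take j)).2.1 = false :=
        ((isBad_of_ent _ _ _ h2).mp hb).2
      have hcond := (adv_label_false k d L A (tr.take j) hy).1
      calc bC d L (tr.take (j+1)) ≤ bC d L (tr.take j) + 1 := by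
            rw [htake]; exact bC_app_le d L _ _
        _ ≤ BB k d := by omega

/-! ### When the budget is exhausted the potential is `0` -/

lemma stuck_zero (k d L : ℕ) (A : RandAlg ℕ Bool) (tr : ATranscript ℕ Bool)
    (hG : GoodT k d L A tr) (hk : 1 ≤ k) (hd : 1 ≤ d)
    (hb : BB k d ≤ bC d L tr) : rP k d L tr = 0 := by
  have hble := bC_le k d L A tr hG
  have hbeq : bC d L tr = BB k d := le_antisymm hble hb
  have hs : k ≤ sC tr := by
    classical
    set Ico := Finset.Ico (2^(L+2)) (2^(L+3)) with hIco
    set S0 := Ico.filter (fun z => 0 < uC z tr) with hS0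
    have h1 : bC d L tr = ∑ z ∈ S0, min (uC z tr) d := by
      rw [hS0]
      refine (Finset.sum_filter_of_ne ?_).symm
      intro z _ hne
      by_contra hz
      push_neg at hz
      have : uC z tr = 0 := by omega
      simp [this] at hne
    have h2 : ∑ z ∈ S0, min (uC z tr) d ≤ S0.card * d := by
      have := Finset.sum_le_card_nsmul S0 (fun z => min (uC z tr) d) d
        (fun z _ => min_le_right _ _)
      simpa [smul_eq_mul] using this
    -- every slot with a bad mistake is a true-labeled revealed example
    set trueXs := ((tr.filter (fun e => labE e)).map (fun e => e.1)).toFinset with htX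
    have hsub : S0 ⊆ trueXs := by
      intro z hz
      rw [hS0, Finset.mem_filter] at hz
      obtain ⟨hzIco, hzpos⟩ := hz
      have hex : ∃ e ∈ tr, (isBadE e && decide (e.2.1 = z)) = true := by
        rw [← List.countP_pos_iff]
        exact hzpos
      obtain ⟨e, he, hpe⟩ := hex
      simp only [Bool.and_eq_true, decide_eq_true_eq] at hpe
      obtain ⟨t, hget⟩ := List.mem_iff_get.mp he
      obtain ⟨g1, g2, g3⟩ := hG t.1 t.2
      simp only [Fin.eta] at g1 g2 g3
      rw [hget] at g1 g2 g3
      have hyh : e.2.2.1 = true := ((isBad_of_ent _ _ _ g2).mp hpe.1).1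
      -- legality
      rw [hpe.2, hyh] at g3
      rcases g3 with hH | hrev
      · -- impossible: z ≥ 2^(L+2) > 2
        exfalso
        rw [Finset.mem_Ico] at hzIco
        have h4 : (4:ℕ) ≤ 2^(L+2) := by
          calc (4:ℕ) = 2^2 := rfl
          _ ≤ 2^(L+2) := Nat.pow_le_pow_right (by norm_num) (by omega)
        rcases hH with h | h
        · have := congrArg Prod.snd h
          simp at this
        · have := congrArg Prod.fst h
          simp at this
          omega
      · obtain ⟨e', he', hfst, hcase⟩ := hrev
        have hlab' : labE e' = true := by
          rcases hcase with ⟨hn, hy⟩ | ⟨φ, hsome⟩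
          · unfold labE; rw [hn]; exact hy
          · unfold labE; rw [hsome]
        have he'tr : e' ∈ tr := List.mem_of_mem_take he'
        rw [htX, List.mem_toFinset]
        refine List.mem_map.mpr ⟨e', ?_, hfst⟩
        rw [List.mem_filter]
        exact ⟨he'tr, by rw [hlab']⟩
    have h3 : S0.card ≤ sC tr := by
      calc S0.card ≤ trueXs.card := Finset.card_le_card hsub
        _ ≤ ((tr.filter (fun e => labE e)).map (fun e => e.1)).length :=
            List.toFinset_card_le _
        _ = (tr.filter (fun e => labE e)).length := List.length_map _
        _ = sC tr := (List.countP_eq_length_filter).symm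
    -- now : BB ≤ S0.card * d ≤ sC * d, conclude k ≤ sC
    by_contra hcon
    push_neg at hcon
    have h5 : (sC tr + 1) * d ≤ k * d := Nat.mul_le_mul_right d (by omega)
    have h6 : BB k d ≤ sC tr * d := by
      calc BB k d = bC d L tr := hbeq.symm
        _ = ∑ z ∈ S0, min (uC z tr) d := h1
        _ ≤ S0.card * d := h2
        _ ≤ sC tr * d := Nat.mul_le_mul_right d h3
    have h7 : (k+1)*d = k*d + d := by ring
    have h8 : (sC tr + 1) * d = sC tr * d + d := by ring
    have h9 : 1 ≤ (k+1)*d := Nat.mul_pos (by omega) hd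
    unfold BB at h6
    omega
  have hk2 : k - sC tr = 0 := by omega
  have hb2 : BB k d - bC d L tr = 0 := by omega
  unfold rP
  rw [hk2, hb2]

/-! ### Support of the run and the invariant -/

lemma good_nil (k d L : ℕ) (A : RandAlg ℕ Bool) : GoodT k d L A [] := by
  intro t ht
  simp at ht

lemma good_step (k d L : ℕ) (A : RandAlg ℕ Bool) (hA : LegalRand A HbulSS)
    (tr : ATranscript ℕ Bool) (hG : GoodT k d L A tr)
    (q : ℕ × Bool) (hq : q ∈ (A tr (xF L tr)).support) :
    GoodT k d L A (tr ++ [entS k d L A tr q]) := by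
  intro t ht
  have hlen : (tr ++ [entS k d L A tr q]).length = tr.length + 1 := by simp
  rcases Nat.lt_or_ge t tr.length with h | h
  · have hget : (tr ++ [entS k d L A tr q]).get ⟨t, ht⟩ = tr.get ⟨t, h⟩ := by
      simp [List.getElem_append_left h]
    have htake : (tr ++ [entS k d L A tr q]).take t = tr.take t :=
      List.take_append_of_le_length (le_of_lt h)
    rw [hget, htake]
    exact hG t h
  · have h' : t = tr.length := by
      rw [hlen] at ht
      omega
    subst h'
    have hget : (tr ++ [entS k d L A tr q]).get ⟨tr.length, ht⟩ = entS k d L A tr q := by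
      simp [List.getElem_concat_length]
    have htake : (tr ++ [entS k d L A tr q]).take tr.length = tr := List.take_left
    rw [hget, htake]
    refine ⟨rfl, ?_, ?_⟩
    · by_cases hq2 : q.2 = (advS k d L A tr).2.1
      · left
        refine ⟨hq2, ?_⟩
        show (@ite _ (q.2 = (advS k d L A tr).2.1) (Classical.propDecidable _) none
          (some ((advS k d L A tr).2.1,
            (advS k d L A tr).2.2 (advS k d L A tr).1 q.1))) = none
        rw [if_pos hq2]
      · right
        refine ⟨hq2, ?_⟩
        show (@ite _ (q.2 = (advS k d L A tr).2.1) (Classical.propDecidable _) none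
          (some ((advS k d L A tr).2.1,
            (advS k d L A tr).2.2 (advS k d L A tr).1 q.1))) = _
        rw [if_neg hq2]
        rfl
    · have := hA tr (xF L tr) q hq
      simpa [entS] using this

lemma support_good (k d L : ℕ) (A : RandAlg ℕ Bool) (hA : LegalRand A HbulSS) :
    ∀ n (tr : ATranscript ℕ Bool), tr ∈ (runPMF A (advS k d L A) n).support →
      GoodT k d L A tr ∧ tr.length = n := by
  intro n
  induction n with
  | zero =>
    intro tr htr
    rw [runPMF] at htr
    rw [PMF.support_pure, Set.mem_singleton_iff] at htr
    subst htr
    exact ⟨good_nil k d L A, rfl⟩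
  | succ n ih =>
    intro tr' htr'
    rw [runPMF] at htr'
    rw [PMF.mem_support_bind_iff] at htr'
    obtain ⟨tr, htr, h2⟩ := htr'
    rw [PMF.mem_support_bind_iff] at h2
    obtain ⟨q, hq, h3⟩ := h2
    rw [PMF.mem_support_pure_iff] at h3
    obtain ⟨hGood, hlen⟩ := ih tr htr
    have heq : tr' = tr ++ [entS k d L A tr q] := by rw [h3]; rfl
    subst heq
    constructor
    · exact good_step k d L A hA tr hGood q hq
    · simp [hlen]

/-! ### Expected mistakes as a backward recursion -/

noncomputable def valF (k d L : ℕ) (A : RandAlg ℕ Bool) :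
    ℕ → ATranscript ℕ Bool → ℝ≥0∞
  | 0, tr => (mistakesA tr : ℝ≥0∞)
  | n+1, tr => ∑' q : ℕ × Bool,
      A tr (advS k d L A tr).1 q * valF k d L A n (tr ++ [entS k d L A tr q])

lemma tsum_bind_mul {α β : Type} (P : PMF α) (F : α → PMF β) (g : β → ℝ≥0∞) :
    ∑' b, (P.bind F) b * g b = ∑' a, P a * ∑' b, F a b * g b := by
  calc ∑' b, (P.bind F) b * g b
      = ∑' b, ∑' a, (P a * F a b) * g b := by
        refine tsum_congr (fun b => ?_)
        rw [PMF.bind_apply, ← ENNReal.tsum_mul_right]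
    _ = ∑' a, ∑' b, (P a * F a b) * g b := ENNReal.tsum_comm
    _ = ∑' a, P a * ∑' b, F a b * g b := by
        refine tsum_congr (fun a => ?_)
        rw [← ENNReal.tsum_mul_left]
        exact tsum_congr (fun b => by ring)

lemma tsum_pure_mul {α : Type} (a : α) (g : α → ℝ≥0∞) :
    ∑' b, (PMF.pure a) b * g b = g a := by
  rw [tsum_eq_single a]
  · simp [PMF.pure_apply]
  · intro b hb
    simp [PMF.pure_apply, hb]

lemma run_val (k d L : ℕ) (A : RandAlg ℕ Bool) :
    ∀ n m, ∑' tr, runPMF A (advS k d L A) n tr * valF k d L A m tr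
      = valF k d L A (n+m) [] := by
  intro n
  induction n with
  | zero =>
    intro m
    rw [runPMF, tsum_pure_mul]
    simp
  | succ n ih =>
    intro m
    rw [runPMF, tsum_bind_mul]
    have key : ∀ tr : ATranscript ℕ Bool,
        (∑' tr', ((A tr (advS k d L A tr).1).bind
          (fun p => PMF.pure (tr ++ [entS k d L A tr p]))) tr' * valF k d L A m tr')
        = valF k d L A (m+1) tr := by
      intro tr
      rw [tsum_bind_mul]
      exact tsum_congr (fun q => by rw [tsum_pure_mul])
    refine Eq.trans (b := ∑' tr, runPMF A (advS k d L A) n tr * valF k d L A (m+1) tr)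
      (tsum_congr (fun tr => ?_)) ?_
    · exact congrArg (fun z => runPMF A (advS k d L A) n tr * z) (key tr)
    · rw [ih (m+1), show n+(m+1) = (n+1)+m by omega]

lemma val_eq (k d L : ℕ) (A : RandAlg ℕ Bool) :
    expMistakes A (advS k d L A) L = valF k d L A L [] := by
  unfold expMistakes
  have h := run_val k d L A L 0
  rw [Nat.add_zero] at h
  rw [← h]
  rfl

/-! ### Splitting a sum over predictions by the predicted label -/

lemma splitQ (P : PMF (ℕ × Bool)) (h : Bool → ℝ≥0∞) :
    ∑' q : ℕ × Bool, P q * h q.2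
      = (∑' m : ℕ, P (m, true)) * h true + (∑' m : ℕ, P (m, false)) * h false := by
  rw [ENNReal.tsum_prod']
  calc ∑' a, ∑' b, P (a, b) * h b
      = ∑' a, (P (a, false) * h false + P (a, true) * h true) :=
        tsum_congr (fun a => tsum_bool _)
    _ = (∑' a, P (a, false) * h false) + ∑' a, P (a, true) * h true := ENNReal.tsum_add
    _ = _ := by
        rw [ENNReal.tsum_mul_right, ENNReal.tsum_mul_right]
        ring

lemma sumQ (P : PMF (ℕ × Bool)) :
    (∑' m : ℕ, P (m, true)) + (∑' m : ℕ, P (m, false)) = 1 := by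
  have h := P.tsum_coe
  rw [ENNReal.tsum_prod'] at h
  calc (∑' m : ℕ, P (m, true)) + (∑' m : ℕ, P (m, false))
      = ∑' a, (P (a, false) + P (a, true)) := by
        rw [ENNReal.tsum_add]
        ring
    _ = ∑' a, ∑' b, P (a, b) := tsum_congr (fun a => (tsum_bool (fun b => P (a, b))).symm)
    _ = 1 := h

/-! ### The convexity trick -/

lemma two_mix (α β X Y : ℝ≥0∞) (hs : α + β = 1) (hα : 1 ≤ 2 * α)
    (hXY : Y ≤ X) (hX : X ≠ ∞) (hY : Y ≠ ∞) :
    X + Y ≤ 2 * (α * X) + 2 * (β * Y) := by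
  have hα1 : α ≤ 1 := by rw [← hs]; exact le_self_add
  have hβ1 : β ≤ 1 := by rw [← hs]; exact le_add_self
  have hαt : α ≠ ∞ := (lt_of_le_of_lt hα1 ENNReal.one_lt_top).ne
  have hβt : β ≠ ∞ := (lt_of_le_of_lt hβ1 ENNReal.one_lt_top).ne
  lift α to NNReal using hαt
  lift β to NNReal using hβt
  lift X to NNReal using hX
  lift Y to NNReal using hY
  have hs' : (α : ℝ) + β = 1 := by exact_mod_cast hs
  have hα' : (1:ℝ) ≤ 2 * α := by exact_mod_cast hα
  have hXY' : (Y:ℝ) ≤ X := by exact_mod_cast hXY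
  have hβ' : (β:ℝ) = 1 - (α:ℝ) := by linarith
  have goal' : (X:ℝ) + Y ≤ 2 * (α * X) + 2 * (β * Y) := by
    rw [hβ']
    nlinarith [mul_nonneg (by linarith : (0:ℝ) ≤ 2*α - 1) (by linarith : (0:ℝ) ≤ (X:ℝ) - Y)]
  exact_mod_cast goal'

/-! ### Entry bookkeeping for the potential argument -/

lemma entS_four (k d L : ℕ) (A : RandAlg ℕ Bool) (tr : ATranscript ℕ Bool) (q : ℕ × Bool) :
    (entS k d L A tr q).2.2.2 = (if q.2 = (advS k d L A tr).2.1 then none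
      else some ((advS k d L A tr).2.1,
        (advS k d L A tr).2.2 (advS k d L A tr).1 q.1)) := by
  by_cases h : q.2 = (advS k d L A tr).2.1
  · show (@ite _ (q.2 = (advS k d L A tr).2.1) (Classical.propDecidable _) none _) = _
    rw [if_pos h, if_pos h]
  · show (@ite _ (q.2 = (advS k d L A tr).2.1) (Classical.propDecidable _) none _) = _
    rw [if_neg h, if_neg h]

lemma ent_false (k d L : ℕ) (A : RandAlg ℕ Bool) (tr : ATranscript ℕ Bool)
    (hy : (advS k d L A tr).2.1 = false) (q : ℕ × Bool) :
    mistakesA (tr ++ [entS k d L A tr q]) = mistakesA tr + (if q.2 then 1 else 0) ∧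
    sC (tr ++ [entS k d L A tr q]) = sC tr ∧
    bC d L (tr ++ [entS k d L A tr q]) ≤ bC d L tr + (if q.2 then 1 else 0) := by
  have h4 := entS_four k d L A tr q
  rw [hy] at h4
  rcases Bool.eq_false_or_eq_true q.2 with hq2 | hq2
  · -- q.2 = true : mistake with revealed label false
    rw [hq2, if_neg (by simp)] at h4
    refine ⟨?_, ?_, ?_⟩
    · rw [mist_app, h4, hq2]; simp
    · rw [sC_app]
      have hl : labE (entS k d L A tr q) = false := by
        unfold labE; rw [h4]
      rw [hl]; simp
    · calc bC d L (tr ++ [entS k d L A tr q]) ≤ bC d L tr + 1 := bC_app_le d L tr _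
        _ = bC d L tr + (if q.2 then 1 else 0) := by rw [hq2]; norm_num
  · -- q.2 = false : correct round
    rw [hq2, if_pos rfl] at h4
    refine ⟨?_, ?_, ?_⟩
    · rw [mist_app, h4, hq2]; simp
    · rw [sC_app]
      have hl : labE (entS k d L A tr q) = false := by
        unfold labE; rw [h4]
        show q.2 = false
        exact hq2
      rw [hl]; simp
    · rw [bC_app_eq d L tr _ (by unfold isBadE; rw [h4])]
      rw [hq2]; norm_num

lemma ent_true (k d L : ℕ) (A : RandAlg ℕ Bool) (tr : ATranscript ℕ Bool)
    (hy : (advS k d L A tr).2.1 = true) (q : ℕ × Bool) :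
    mistakesA (tr ++ [entS k d L A tr q]) = mistakesA tr + (if q.2 then 0 else 1) ∧
    sC (tr ++ [entS k d L A tr q]) = sC tr + 1 ∧
    bC d L (tr ++ [entS k d L A tr q]) = bC d L tr := by
  have h4 := entS_four k d L A tr q
  rw [hy] at h4
  rcases Bool.eq_false_or_eq_true q.2 with hq2 | hq2
  · -- q.2 = true : correct round
    rw [hq2, if_pos rfl] at h4
    refine ⟨?_, ?_, ?_⟩
    · rw [mist_app, h4, hq2]; simp
    · rw [sC_app]
      have hl : labE (entS k d L A tr q) = true := by
        unfold labE; rw [h4]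
        show q.2 = true
        exact hq2
      rw [hl]; simp
    · exact bC_app_eq d L tr _ (by unfold isBadE; rw [h4])
  · -- q.2 = false : mistake with revealed label true
    rw [hq2, if_neg (by simp)] at h4
    refine ⟨?_, ?_, ?_⟩
    · rw [mist_app, h4, hq2]; simp
    · rw [sC_app]
      have hl : labE (entS k d L A tr q) = true := by
        unfold labE; rw [h4]
      rw [hl]; simp
    · exact bC_app_eq d L tr _ (by unfold isBadE; rw [h4])

/-! ### The potential lower bound on the expected number of mistakes -/

lemma potential (k d L : ℕ) (hk : 1 ≤ k) (hd : 1 ≤ d) (A : RandAlg ℕ Bool)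
    (hA : LegalRand A HbulSS) :
    ∀ n (tr : ATranscript ℕ Bool), GoodT k d L A tr →
      (2^n : ℝ≥0∞) * (16 * (mistakesA tr : ℝ≥0∞)) + (Hn n (rP k d L tr) : ℝ≥0∞)
        ≤ (2^n : ℝ≥0∞) * (16 * valF k d L A n tr) := by
  intro n
  induction n with
  | zero =>
    intro tr _
    rw [pow_zero, Hn_zero]
    show 1 * (16 * (mistakesA tr : ℝ≥0∞)) + ((0:ℕ):ℝ≥0∞) ≤ 1 * (16 * valF k d L A 0 tr)
    rw [Nat.cast_zero, add_zero]
    exact le_refl _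
  | succ n ih =>
    intro tr hG
    -- abbreviations
    set P : PMF (ℕ × Bool) := A tr (advS k d L A tr).1 with hP
    set α : ℝ≥0∞ := ∑' m : ℕ, P (m, true) with hα
    set ᾱ : ℝ≥0∞ := ∑' m : ℕ, P (m, false) with hᾱ
    have hsum : α + ᾱ = 1 := sumQ P
    have hα1 : α ≤ 1 := by rw [← hsum]; exact le_self_add
    have hᾱ1 : ᾱ ≤ 1 := by rw [← hsum]; exact le_add_self
    have hαeq : alphaP A L tr = α := rfl
    set G : ℕ := mistakesA tr with hGdef
    set r : ℕ := rP k d L tr with hrdef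
    -- expanding the RHS
    have hval : (2^(n+1) : ℝ≥0∞) * (16 * valF k d L A (n+1) tr)
        = ∑' q : ℕ × Bool, P q *
            ((2^(n+1) : ℝ≥0∞) * (16 * valF k d L A n (tr ++ [entS k d L A tr q]))) := by
      rw [show valF k d L A (n+1) tr = ∑' q : ℕ × Bool,
        P q * valF k d L A n (tr ++ [entS k d L A tr q]) from rfl]
      rw [← ENNReal.tsum_mul_left, ← ENNReal.tsum_mul_left]
      exact tsum_congr (fun q => by ring)
    -- the pointwise bound from IH
    have hpoint : ∀ (q : ℕ × Bool) (mq dq : ℕ),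
        mistakesA (tr ++ [entS k d L A tr q]) = G + mq →
        r - dq ≤ rP k d L (tr ++ [entS k d L A tr q]) →
        P q * (2 * ((2^n : ℝ≥0∞) * (16 * ((G:ℝ≥0∞) + mq)) + (Hn n (r - dq) : ℝ≥0∞)))
          ≤ P q * ((2^(n+1) : ℝ≥0∞) * (16 * valF k d L A n (tr ++ [entS k d L A tr q]))) := by
      intro q mq dq hm hr
      by_cases hq : q ∈ P.support
      · have hGood := good_step k d L A hA tr hG q hq
        have hIH := ih (tr ++ [entS k d L A tr q]) hGood
        refine mul_le_mul_right ?_ _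
        have h1 : (2^n : ℝ≥0∞) * (16 * ((G:ℝ≥0∞) + mq)) + (Hn n (r - dq) : ℝ≥0∞)
            ≤ (2^n : ℝ≥0∞) * (16 * (mistakesA (tr ++ [entS k d L A tr q]) : ℝ≥0∞))
              + (Hn n (rP k d L (tr ++ [entS k d L A tr q])) : ℝ≥0∞) := by
          refine add_le_add ?_ ?_
          · rw [hm]; push_cast; exact le_refl _
          · exact_mod_cast Hn_mono n hr
        calc 2 * ((2^n : ℝ≥0∞) * (16 * ((G:ℝ≥0∞) + mq)) + (Hn n (r - dq) : ℝ≥0∞))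
            ≤ 2 * ((2^n : ℝ≥0∞) * (16 * valF k d L A n (tr ++ [entS k d L A tr q]))) :=
              mul_le_mul_right (h1.trans hIH) 2
          _ = (2^(n+1) : ℝ≥0∞) * (16 * valF k d L A n (tr ++ [entS k d L A tr q])) := by
              ring
      · have : P q = 0 := PMF.apply_eq_zero_iff P q |>.mpr hq
        rw [this, zero_mul, zero_mul]
    by_cases hcond : bC d L tr < BB k d ∧ (2:ℝ≥0∞)⁻¹ ≤ alphaP A L tr
    · -- F-round : the adversary labels false
      have hyA : (advS k d L A tr).2.1 = false := by
        unfold advS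
        simp only
        rw [if_pos hcond]
      have h2α : (1:ℝ≥0∞) ≤ 2 * α := by
        calc (1:ℝ≥0∞) = 2 * 2⁻¹ := by
              rw [ENNReal.mul_inv_cancel two_ne_zero ENNReal.ofNat_ne_top]
          _ ≤ 2 * α := mul_le_mul_right (hαeq ▸ hcond.2) 2
      -- β-values
      set Xt : ℕ := 16*2^n + Hn n (r - 16) with hXt
      set Yv : ℕ := Hn n r with hYv
      have hXY : (Yv:ℝ≥0∞) ≤ (Xt:ℝ≥0∞) := by
        exact_mod_cast (Hn_lip n r).trans_eq (by omega)
      -- main chain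
      have hmain : (2^(n+1) : ℝ≥0∞) * (16 * (G:ℝ≥0∞)) + (Hn (n+1) r : ℝ≥0∞)
          ≤ 2 * (α * ((2^n : ℝ≥0∞) * (16 * ((G:ℝ≥0∞) + 1)) + (Hn n (r - 16) : ℝ≥0∞)))
            + 2 * (ᾱ * ((2^n : ℝ≥0∞) * (16 * ((G:ℝ≥0∞) + 0)) + (Hn n (r - 0) : ℝ≥0∞))) := by
        have e1 : 2 * (α * ((2^n : ℝ≥0∞) * (16 * ((G:ℝ≥0∞) + 1)) + (Hn n (r - 16) : ℝ≥0∞)))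
            + 2 * (ᾱ * ((2^n : ℝ≥0∞) * (16 * ((G:ℝ≥0∞) + 0)) + (Hn n (r - 0) : ℝ≥0∞)))
            = (α + ᾱ) * ((2^(n+1) : ℝ≥0∞) * (16 * (G:ℝ≥0∞)))
              + (2 * (α * (Xt:ℝ≥0∞)) + 2 * (ᾱ * (Yv:ℝ≥0∞))) := by
          rw [hXt, hYv]
          push_cast
          rw [Nat.sub_zero]
          ring
        rw [e1, hsum, one_mul]
        refine add_le_add_right ?_ _
        have e2 : (Hn (n+1) r : ℝ≥0∞) ≤ (Xt:ℝ≥0∞) + (Yv:ℝ≥0∞) := by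
          exact_mod_cast (Hn_L1 n r).trans_eq (by omega)
        refine e2.trans ?_
        exact two_mix α ᾱ (Xt:ℝ≥0∞) (Yv:ℝ≥0∞) hsum h2α hXY
          (ENNReal.natCast_ne_top Xt) (ENNReal.natCast_ne_top Yv)
      -- link to the tsum
      have hsplit : ∑' q : ℕ × Bool, P q * (2 * ((2^n : ℝ≥0∞) *
            (16 * ((G:ℝ≥0∞) + (if q.2 then 1 else 0))) +
            (Hn n (r - (if q.2 then 16 else 0)) : ℝ≥0∞)))
          = 2 * (α * ((2^n : ℝ≥0∞) * (16 * ((G:ℝ≥0∞) + 1)) + (Hn n (r - 16) : ℝ≥0∞)))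
            + 2 * (ᾱ * ((2^n : ℝ≥0∞) * (16 * ((G:ℝ≥0∞) + 0)) + (Hn n (r - 0) : ℝ≥0∞))) := by
        rw [splitQ P (fun b => 2 * ((2^n : ℝ≥0∞) * (16 * ((G:ℝ≥0∞) + (if b then 1 else 0))) +
          (Hn n (r - (if b then 16 else 0)) : ℝ≥0∞)))]
        norm_num
        rw [← hα, ← hᾱ]
        ring
      calc (2^(n+1) : ℝ≥0∞) * (16 * (G:ℝ≥0∞)) + (Hn (n+1) r : ℝ≥0∞)
          ≤ _ := hmain
        _ = ∑' q : ℕ × Bool, P q * (2 * ((2^n : ℝ≥0∞) *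
              (16 * ((G:ℝ≥0∞) + (if q.2 then 1 else 0))) +
              (Hn n (r - (if q.2 then 16 else 0)) : ℝ≥0∞))) := hsplit.symm
        _ ≤ ∑' q : ℕ × Bool, P q *
              ((2^(n+1) : ℝ≥0∞) * (16 * valF k d L A n (tr ++ [entS k d L A tr q]))) := by
            refine Summable.tsum_le_tsum (fun q => ?_) ENNReal.summable ENNReal.summable
            obtain ⟨hm, hs, hb⟩ := ent_false k d L A tr hyA q
            have hrq : r - (if q.2 then 16 else 0) ≤ rP k d L (tr ++ [entS k d L A tr q]) := by
              rw [hrdef]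
              unfold rP
              rw [hs]
              rcases Bool.eq_false_or_eq_true q.2 with h2 | h2 <;> rw [h2] at hb ⊢ <;>
                norm_num at hb ⊢ <;> omega
            have hbound := hpoint q (if q.2 then 1 else 0) (if q.2 then 16 else 0) hm hrq
            push_cast at hbound
            exact hbound
        _ = (2^(n+1) : ℝ≥0∞) * (16 * valF k d L A (n+1) tr) := hval.symm
    · -- the adversary labels true
      have hyA : (advS k d L A tr).2.1 = true := by
        unfold advS
        simp only
        rw [if_neg hcond]
      by_cases hstuck : bC d L tr < BB k d
      · -- then ¬ (2⁻¹ ≤ α), so ᾱ ≥ 1/2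
        have hαlt : ¬ (2:ℝ≥0∞)⁻¹ ≤ alphaP A L tr := fun h => hcond ⟨hstuck, h⟩
        rw [hαeq] at hαlt
        have h2ᾱ : (1:ℝ≥0∞) ≤ 2 * ᾱ := by
          have hᾱge : (2:ℝ≥0∞)⁻¹ ≤ ᾱ := by
            by_contra h'
            push_neg at h'
            have hlt : α + ᾱ < 2⁻¹ + 2⁻¹ := ENNReal.add_lt_add (lt_of_not_ge hαlt) h'
            rw [hsum, ENNReal.inv_two_add_inv_two] at hlt
            exact lt_irrefl _ hlt
          calc (1:ℝ≥0∞) = 2 * 2⁻¹ := by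
                rw [ENNReal.mul_inv_cancel two_ne_zero ENNReal.ofNat_ne_top]
            _ ≤ 2 * ᾱ := mul_le_mul_right hᾱge 2
        have hmain : (2^(n+1) : ℝ≥0∞) * (16 * (G:ℝ≥0∞)) + (Hn (n+1) r : ℝ≥0∞)
            ≤ 2 * (α * ((2^n : ℝ≥0∞) * (16 * ((G:ℝ≥0∞) + 0)) + (Hn n (r - 8) : ℝ≥0∞)))
              + 2 * (ᾱ * ((2^n : ℝ≥0∞) * (16 * ((G:ℝ≥0∞) + 1)) + (Hn n (r - 8) : ℝ≥0∞))) := by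
          have e1 : 2 * (α * ((2^n : ℝ≥0∞) * (16 * ((G:ℝ≥0∞) + 0)) + (Hn n (r - 8) : ℝ≥0∞)))
              + 2 * (ᾱ * ((2^n : ℝ≥0∞) * (16 * ((G:ℝ≥0∞) + 1)) + (Hn n (r - 8) : ℝ≥0∞)))
              = (α + ᾱ) * ((2^(n+1) : ℝ≥0∞) * (16 * (G:ℝ≥0∞))
                  + 2 * (Hn n (r - 8) : ℝ≥0∞))
                + (2 * ᾱ) * ((16 * 2^n : ℕ) : ℝ≥0∞) := by
            push_cast
            ring
          rw [e1, hsum, one_mul]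
          have e2 : (Hn (n+1) r : ℝ≥0∞)
              ≤ 2 * (Hn n (r - 8) : ℝ≥0∞) + 1 * ((16 * 2^n : ℕ) : ℝ≥0∞) := by
            rw [one_mul]
            have := Hn_L2 n r
            calc (Hn (n+1) r : ℝ≥0∞) ≤ ((16 * 2^n + 2 * Hn n (r - 8) : ℕ) : ℝ≥0∞) := by
                  exact_mod_cast this
              _ = 2 * (Hn n (r - 8) : ℝ≥0∞) + ((16 * 2^n : ℕ) : ℝ≥0∞) := by
                  push_cast; ring
          calc (2^(n+1) : ℝ≥0∞) * (16 * (G:ℝ≥0∞)) + (Hn (n+1) r : ℝ≥0∞)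
              ≤ (2^(n+1) : ℝ≥0∞) * (16 * (G:ℝ≥0∞))
                + (2 * (Hn n (r - 8) : ℝ≥0∞) + 1 * ((16 * 2^n : ℕ) : ℝ≥0∞)) :=
                add_le_add_right e2 _
            _ ≤ (2^(n+1) : ℝ≥0∞) * (16 * (G:ℝ≥0∞))
                + (2 * (Hn n (r - 8) : ℝ≥0∞) + (2 * ᾱ) * ((16 * 2^n : ℕ) : ℝ≥0∞)) := by
                refine add_le_add_right (add_le_add_right ?_ _) _
                exact mul_le_mul_left h2ᾱ _
            _ = ((2^(n+1) : ℝ≥0∞) * (16 * (G:ℝ≥0∞)) + 2 * (Hn n (r - 8) : ℝ≥0∞))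
                + (2 * ᾱ) * ((16 * 2^n : ℕ) : ℝ≥0∞) := by ring
        have hsplit : ∑' q : ℕ × Bool, P q * (2 * ((2^n : ℝ≥0∞) *
              (16 * ((G:ℝ≥0∞) + (if q.2 then 0 else 1))) + (Hn n (r - 8) : ℝ≥0∞)))
            = 2 * (α * ((2^n : ℝ≥0∞) * (16 * ((G:ℝ≥0∞) + 0)) + (Hn n (r - 8) : ℝ≥0∞)))
              + 2 * (ᾱ * ((2^n : ℝ≥0∞) * (16 * ((G:ℝ≥0∞) + 1)) + (Hn n (r - 8) : ℝ≥0∞))) := by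
          rw [splitQ P (fun b => 2 * ((2^n : ℝ≥0∞) * (16 * ((G:ℝ≥0∞) + (if b then 0 else 1))) +
            (Hn n (r - 8) : ℝ≥0∞)))]
          norm_num
          rw [← hα, ← hᾱ]
          ring
        calc (2^(n+1) : ℝ≥0∞) * (16 * (G:ℝ≥0∞)) + (Hn (n+1) r : ℝ≥0∞)
            ≤ _ := hmain
          _ = ∑' q : ℕ × Bool, P q * (2 * ((2^n : ℝ≥0∞) *
                (16 * ((G:ℝ≥0∞) + (if q.2 then 0 else 1))) + (Hn n (r - 8) : ℝ≥0∞))) :=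
              hsplit.symm
          _ ≤ ∑' q : ℕ × Bool, P q *
                ((2^(n+1) : ℝ≥0∞) * (16 * valF k d L A n (tr ++ [entS k d L A tr q]))) := by
              refine Summable.tsum_le_tsum (fun q => ?_) ENNReal.summable ENNReal.summable
              obtain ⟨hm, hs, hb⟩ := ent_true k d L A tr hyA q
              have hrq : r - 8 ≤ rP k d L (tr ++ [entS k d L A tr q]) := by
                rw [hrdef]
                unfold rP
                rw [hs, hb]
                omega
              have hbound := hpoint q (if q.2 then 0 else 1) 8 hm hrq
              push_cast at hbound
              exact hbound
          _ = (2^(n+1) : ℝ≥0∞) * (16 * valF k d L A (n+1) tr) := hval.symm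
      · -- stuck : the potential is zero
        push_neg at hstuck
        have hr0 : r = 0 := by
          rw [hrdef]
          exact stuck_zero k d L A tr hG hk hd hstuck
        rw [hr0, Hn_zero_r, Nat.cast_zero, add_zero]
        have hpt : ∀ q : ℕ × Bool,
            P q * ((2^(n+1) : ℝ≥0∞) * (16 * (G:ℝ≥0∞)))
              ≤ P q * ((2^(n+1) : ℝ≥0∞) * (16 * valF k d L A n (tr ++ [entS k d L A tr q]))) := by
          intro q
          by_cases hq : q ∈ P.support
          · refine mul_le_mul_right ?_ _
            have hGood := good_step k d L A hA tr hG q hq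
            have hIH := ih (tr ++ [entS k d L A tr q]) hGood
            have hmono : (G:ℝ≥0∞) ≤ (mistakesA (tr ++ [entS k d L A tr q]) : ℝ≥0∞) := by
              rw [mist_app]
              exact_mod_cast Nat.le_add_right _ _
            have h1 : (2^n : ℝ≥0∞) * (16 * (G:ℝ≥0∞))
                ≤ (2^n : ℝ≥0∞) * (16 * valF k d L A n (tr ++ [entS k d L A tr q])) := by
              refine le_trans ?_ (le_trans (le_add_right (le_refl _)) hIH)
              exact mul_le_mul_right (mul_le_mul_right hmono 16) _
            calc (2^(n+1) : ℝ≥0∞) * (16 * (G:ℝ≥0∞))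
                = 2 * ((2^n : ℝ≥0∞) * (16 * (G:ℝ≥0∞))) := by ring
              _ ≤ 2 * ((2^n : ℝ≥0∞) * (16 * valF k d L A n (tr ++ [entS k d L A tr q]))) :=
                  mul_le_mul_right h1 2
              _ = (2^(n+1) : ℝ≥0∞) * (16 * valF k d L A n (tr ++ [entS k d L A tr q])) := by
                  ring
          · have : P q = 0 := PMF.apply_eq_zero_iff P q |>.mpr hq
            rw [this, zero_mul, zero_mul]
        calc (2^(n+1) : ℝ≥0∞) * (16 * (G:ℝ≥0∞))
            = (∑' q : ℕ × Bool, P q) * ((2^(n+1) : ℝ≥0∞) * (16 * (G:ℝ≥0∞))) := by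
              rw [P.tsum_coe, one_mul]
          _ = ∑' q : ℕ × Bool, P q * ((2^(n+1) : ℝ≥0∞) * (16 * (G:ℝ≥0∞))) :=
              (ENNReal.tsum_mul_right).symm
          _ ≤ ∑' q : ℕ × Bool, P q *
                ((2^(n+1) : ℝ≥0∞) * (16 * valF k d L A n (tr ++ [entS k d L A tr q]))) :=
              Summable.tsum_le_tsum hpt ENNReal.summable ENNReal.summable
          _ = (2^(n+1) : ℝ≥0∞) * (16 * valF k d L A (n+1) tr) := hval.symm

/-! ### The teacher constructed from a final transcript -/

def e0 : Entry := (0, 0, false, none)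

def labAt (tr : ATranscript ℕ Bool) (t : ℕ) : Bool := labE (tr.getD t e0)

lemma labAt_eq (tr : ATranscript ℕ Bool) (t : ℕ) (ht : t < tr.length) :
    labAt tr t = labE (tr.get ⟨t, ht⟩) := by
  unfold labAt
  rw [List.getD_eq_getElem tr e0 ht]
  rfl

/-- The labeling function: burned slots are flipped to `false`. -/
def ffS (d L : ℕ) (tr : ATranscript ℕ Bool) : ℕ → Bool := fun z =>
  if z = 1 then true
  else if (∃ t, t < tr.length ∧ 2^(L+2) + t = z ∧ labAt tr t = true ∧ uC z tr < d)
    then true else false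

/-- The codes of the rounds whose bad mistake was explained by `z`. -/
noncomputable def codesZ (L : ℕ) (P : ℕ) (tr : ATranscript ℕ Bool) (z : ℕ) :
    Finset (ZMod P) :=
  ((tr.filter (fun e => isBadE e && decide (e.2.1 = z))).map
    (fun e => ((e.1 - 2^(L+2) + 1 : ℕ) : ZMod P))).toFinset

/-- The secret-sharing polynomial of slot `z`. -/
noncomputable def QzS (d L : ℕ) (P : ℕ) (s : ZMod P) (tr : ATranscript ℕ Bool)
    (z : ℕ) : Polynomial (ZMod P) :=
  Polynomial.C s * ∏ w ∈ codesZ L P tr z, (1 - Polynomial.C w⁻¹ * Polynomial.X)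

/-- The coefficient tables. -/
noncomputable def aaS (d L : ℕ) (P : ℕ) (s : ZMod P) (tr : ATranscript ℕ Bool) :
    ℕ → Bool → Fin d → ZMod P :=
  fun z c => if (c = false ∧ ffS d L tr z = true)
    then (fun j => (QzS d L P s tr z).coeff j) else 0

lemma psiSS_teacher_spec (d i P : ℕ) (a : ℕ → Bool → Fin d → ZMod P) (f : ℕ → Bool) :
    ∀ x xh : ℕ, f x ≠ f xh →
      ∃ φ ∈ (Set.univ : Set (ℕ → Bool)),
        psiSS d i P a f x xh = some φ ∧ φ x = true ∧ φ xh = false := by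
  intro x xh hne
  have hxxh : x ≠ xh := fun h => hne (by rw [h])
  by_cases hx : x ∈ XiSS i ∧ xh ∈ XiSS i
  · refine ⟨ind2 x (PpolySS d i P (a xh (f x)) x), trivial, ?_, ?_, ?_⟩
    · unfold psiSS; rw [if_pos hx]
    · unfold ind2; simp
    · unfold ind2
      have h1 : xh < 2^(i+1) := hx.2.2
      have h2 : 2^(i+1) ≤ PpolySS d i P (a xh (f x)) x := Nat.le_add_right _ _
      have : ¬(xh = x ∨ xh = PpolySS d i P (a xh (f x)) x) := by
        rintro (h | h)
        · exact hxxh h.symm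
        · omega
      simp [this]
  · refine ⟨ind1 x, trivial, ?_, ?_, ?_⟩
    · unfold psiSS; rw [if_neg hx]
    · unfold ind1; simp
    · unfold ind1; simp [Ne.symm hxxh]

/-- The teacher associated with a transcript. -/
noncomputable def TTS (d L : ℕ) (P : ℕ) (s : ZMod P) (tr : ATranscript ℕ Bool) :
    Teacher ℕ Bool (Set.univ : Set (ℕ → Bool)) :=
  ⟨ffS d L tr, psiSS d (L+2) P (aaS d L P s tr) (ffS d L tr),
    psiSS_teacher_spec d (L+2) P (aaS d L P s tr) (ffS d L tr)⟩

/-! ### Facts about `ffS` -/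

lemma ffS_one (d L : ℕ) (tr : ATranscript ℕ Bool) : ffS d L tr 1 = true := by
  unfold ffS; rw [if_pos rfl]

lemma ffS_out (d L : ℕ) (tr : ATranscript ℕ Bool) (hlen : tr.length ≤ 2^(L+2)) :
    ∀ z : ℕ, z ∉ XiSS (L+2) → z ≠ 1 → ffS d L tr z = false := by
  intro z hz hz1
  unfold ffS
  rw [if_neg hz1, if_neg]
  rintro ⟨t, ht, heq, -, -⟩
  refine hz ?_
  rw [← heq]
  constructor
  · exact Nat.le_add_right _ _
  · have : t < 2^(L+2) := lt_of_lt_of_le ht hlen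
    calc 2^(L+2) + t < 2^(L+2) + 2^(L+2) := by omega
      _ = 2^(L+3) := by ring

lemma ffS_two (d L : ℕ) (tr : ATranscript ℕ Bool) (hlen : tr.length ≤ 2^(L+2)) :
    ffS d L tr 2 = false := by
  refine ffS_out d L tr hlen 2 ?_ (by norm_num)
  intro h
  have h1 := h.1
  have h4 : (4:ℕ) ≤ 2^(L+2) := by
    calc (4:ℕ) = 2^2 := rfl
      _ ≤ 2^(L+2) := Nat.pow_le_pow_right (by norm_num) (by omega)
  omega

lemma ffS_fresh (d L : ℕ) (tr : ATranscript ℕ Bool) (t : ℕ) (ht : t < tr.length)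
    (hnb : ¬(labAt tr t = true ∧ d ≤ uC (2^(L+2)+t) tr)) :
    ffS d L tr (2^(L+2) + t) = labAt tr t := by
  have hz1 : 2^(L+2) + t ≠ 1 := by
    have h4 : (4:ℕ) ≤ 2^(L+2) := by
      calc (4:ℕ) = 2^2 := rfl
        _ ≤ 2^(L+2) := Nat.pow_le_pow_right (by norm_num) (by omega)
    omega
  unfold ffS
  rw [if_neg hz1]
  rcases Bool.eq_false_or_eq_true (labAt tr t) with hlab | hlab
  · have hu : uC (2^(L+2)+t) tr < d := by
      by_contra h
      push_neg at h
      exact hnb ⟨hlab, h⟩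
    rw [hlab, if_pos ⟨t, ht, rfl, hlab, hu⟩]
  · rw [hlab, if_neg]
    rintro ⟨t', ht', heq, hlab', -⟩
    have : t' = t := by omega
    rw [this] at hlab'
    rw [hlab'] at hlab
    exact absurd hlab (by simp)

lemma ffS_true_unburned (d L : ℕ) (tr : ATranscript ℕ Bool) (z : ℕ) (hz1 : z ≠ 1)
    (hf : ffS d L tr z = true) : uC z tr < d := by
  unfold ffS at hf
  rw [if_neg hz1] at hf
  by_cases hex : ∃ t, t < tr.length ∧ 2^(L+2) + t = z ∧ labAt tr t = true ∧ uC z tr < d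
  · obtain ⟨t, -, -, -, hu⟩ := hex
    exact hu
  · rw [if_neg hex] at hf
    exact absurd hf (by simp)

/-! ### Polynomial facts -/

lemma constTerm_coeff (d P : ℕ) (hd : 0 < d) (c : Fin d → ZMod P) :
    constTerm c = c ⟨0, hd⟩ := by
  unfold constTerm
  rw [Finset.sum_eq_single ⟨0, hd⟩]
  · norm_num
  · intro j _ hj
    have hj0 : (j : ℕ) ≠ 0 := by
      intro h
      exact hj (Fin.ext h)
    rw [zero_pow hj0, mul_zero]
  · intro h
    exact absurd (Finset.mem_univ _) h

lemma card_codes (L P : ℕ) (tr : ATranscript ℕ Bool) (z : ℕ) :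
    (codesZ L P tr z).card ≤ uC z tr := by
  unfold codesZ uC
  calc ((tr.filter (fun e => isBadE e && decide (e.2.1 = z))).map
          (fun e => ((e.1 - 2^(L+2) + 1 : ℕ) : ZMod P))).toFinset.card
      ≤ ((tr.filter (fun e => isBadE e && decide (e.2.1 = z))).map
          (fun e => ((e.1 - 2^(L+2) + 1 : ℕ) : ZMod P))).length := List.toFinset_card_le _
    _ = (tr.filter (fun e => isBadE e && decide (e.2.1 = z))).length := List.length_map _
    _ = tr.countP (fun e => isBadE e && decide (e.2.1 = z)) :=
        (List.countP_eq_length_filter).symm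

lemma Qz_natdeg (d L P : ℕ) (s : ZMod P) (tr : ATranscript ℕ Bool) (z : ℕ)
    (hd : 1 ≤ d) (hu : uC z tr < d) : (QzS d L P s tr z).natDegree < d := by
  unfold QzS
  have h1 : (∏ w ∈ codesZ L P tr z, (1 - Polynomial.C w⁻¹ * Polynomial.X)).natDegree
      ≤ (codesZ L P tr z).card := by
    calc (∏ w ∈ codesZ L P tr z, (1 - Polynomial.C w⁻¹ * Polynomial.X)).natDegree
        ≤ ∑ w ∈ codesZ L P tr z, (1 - Polynomial.C w⁻¹ * Polynomial.X).natDegree :=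
          Polynomial.natDegree_prod_le _ _
      _ ≤ ∑ _w ∈ codesZ L P tr z, 1 := by
          refine Finset.sum_le_sum (fun w _ => ?_)
          calc (1 - Polynomial.C w⁻¹ * Polynomial.X).natDegree
              ≤ max (1 : Polynomial (ZMod P)).natDegree
                  (Polynomial.C w⁻¹ * Polynomial.X).natDegree :=
                Polynomial.natDegree_sub_le _ _
            _ ≤ 1 := by
                rw [Polynomial.natDegree_one]
                simp only [max_le_iff]
                refine ⟨by omega, ?_⟩
                calc (Polynomial.C w⁻¹ * Polynomial.X).natDegree
                    ≤ Polynomial.X.natDegree := Polynomial.natDegree_C_mul_le _ _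
                  _ ≤ 1 := Polynomial.natDegree_X_le
      _ = (codesZ L P tr z).card := by rw [Finset.sum_const, smul_eq_mul, mul_one]
  calc (QzS d L P s tr z).natDegree
      ≤ (Polynomial.C s).natDegree
        + (∏ w ∈ codesZ L P tr z, (1 - Polynomial.C w⁻¹ * Polynomial.X)).natDegree := by
        unfold QzS
        exact Polynomial.natDegree_mul_le
    _ ≤ 0 + (codesZ L P tr z).card := by
        rw [Polynomial.natDegree_C]
        omega
    _ < d := by
        have := card_codes L P tr z
        omega

lemma Qz_eval_code (d L P : ℕ) [Fact P.Prime] (s : ZMod P) (tr : ATranscript ℕ Bool)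
    (z : ℕ) (w : ZMod P) (hw : w ∈ codesZ L P tr z) (hw0 : w ≠ 0) :
    (QzS d L P s tr z).eval w = 0 := by
  unfold QzS
  rw [Polynomial.eval_mul, Polynomial.eval_prod]
  have : ∏ v ∈ codesZ L P tr z, Polynomial.eval w (1 - Polynomial.C v⁻¹ * Polynomial.X) = 0 := by
    refine Finset.prod_eq_zero hw ?_
    rw [Polynomial.eval_sub, Polynomial.eval_one, Polynomial.eval_mul,
      Polynomial.eval_C, Polynomial.eval_X]
    rw [inv_mul_cancel₀ hw0]
    ring
  rw [this, mul_zero]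

lemma Qz_eval_zero (d L P : ℕ) (s : ZMod P) (tr : ATranscript ℕ Bool) (z : ℕ) :
    (QzS d L P s tr z).eval 0 = s := by
  unfold QzS
  rw [Polynomial.eval_mul, Polynomial.eval_C, Polynomial.eval_prod]
  have : ∏ v ∈ codesZ L P tr z, Polynomial.eval 0 (1 - Polynomial.C v⁻¹ * Polynomial.X)
      = 1 := by
    refine Finset.prod_eq_one (fun v _ => ?_)
    rw [Polynomial.eval_sub, Polynomial.eval_one, Polynomial.eval_mul,
      Polynomial.eval_C, Polynomial.eval_X]
    ring
  rw [this, mul_one]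

lemma sum_coeff_eval (d P : ℕ) (Q : Polynomial (ZMod P)) (hdeg : Q.natDegree < d)
    (w : ZMod P) : ∑ j : Fin d, Q.coeff (j : ℕ) * w ^ (j : ℕ) = Q.eval w := by
  rw [Polynomial.eval_eq_sum_range' hdeg w]
  exact Fin.sum_univ_eq_sum_range (fun j => Q.coeff j * w ^ j) d

/-! ### Round consistency helpers -/

lemma roundCons_none (T : Teacher ℕ Bool (Set.univ : Set (ℕ → Bool))) (e : Entry)
    (h : e.2.2.2 = none) : RoundCons T e ↔ T.label e.1 = e.2.2.1 := by
  unfold RoundCons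
  rw [h]

lemma roundCons_some (T : Teacher ℕ Bool (Set.univ : Set (ℕ → Bool))) (e : Entry)
    (y : Bool) (φ : ℕ → Bool) (h : e.2.2.2 = some (y, φ)) :
    RoundCons T e ↔ (T.label e.1 = y ∧ T.feedback e.1 e.2.1 = some φ) := by
  unfold RoundCons
  rw [h]

/-! ### The consistency of the adversary's transcripts -/

lemma consis (k d L : ℕ) (hk : 1 ≤ k) (hd : 1 ≤ d)
    (p : ℕ → ℕ) (hp : ∀ i : ℕ, (p i).Prime) (hp2 : ∀ i : ℕ, 2 ^ (2 ^ i) ≤ p i)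
    (b : ∀ i : ℕ, (ℕ → Bool) → ZMod (p i))
    (A : RandAlg ℕ Bool) (tr : ATranscript ℕ Bool)
    (hG : GoodT k d L A tr) (hlen : tr.length = L) :
    kConsistent (TfullSS d p b) HbulSS k tr := by
  classical
  haveI hPP : Fact ((p (L+2)).Prime) := ⟨hp (L+2)⟩
  haveI hP0 : NeZero (p (L+2)) := ⟨(hp (L+2)).pos.ne'⟩
  -- size facts
  have hL2 : L < 2^(L+2) := by
    calc L < 2^L := Nat.lt_two_pow_self
      _ ≤ 2^(L+2) := Nat.pow_le_pow_right (by norm_num) (by omega)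
  have hlenle : tr.length ≤ 2^(L+2) := by omega
  have h4 : (4:ℕ) ≤ 2^(L+2) := by
    calc (4:ℕ) = 2^2 := rfl
      _ ≤ 2^(L+2) := Nat.pow_le_pow_right (by norm_num) (by omega)
  have hPbig : L + 1 < p (L+2) := by
    have h1 : L + 1 ≤ 2^L := Nat.lt_two_pow_self
    have h2 : (2:ℕ)^L < 2^(2^(L+2)) := Nat.pow_lt_pow_right (by norm_num) hL2
    have h3 := hp2 (L+2)
    omega
  refine ⟨TTS d L (p (L+2)) (b (L+2) (ffS d L tr)) tr, ?_, ?_, ?_⟩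
  · -- membership in the teacher class
    refine Set.mem_iUnion.mpr ⟨L+2, ?_⟩
    refine ⟨ffS d L tr, ⟨ffS_one d L tr, ffS_out d L tr hlenle⟩,
      aaS d L (p (L+2)) (b (L+2) (ffS d L tr)) tr, ?_, rfl, rfl⟩
    intro xh hxh hfxh
    have haa : aaS d L (p (L+2)) (b (L+2) (ffS d L tr)) tr xh false
        = fun j : Fin d => (QzS d L (p (L+2)) (b (L+2) (ffS d L tr)) tr xh).coeff (j:ℕ) := by
      unfold aaS
      rw [if_pos ⟨rfl, hfxh⟩]
    rw [haa, constTerm_coeff d (p (L+2)) hd]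
    show (QzS d L (p (L+2)) (b (L+2) (ffS d L tr)) tr xh).coeff 0 = b (L+2) (ffS d L tr)
    rw [Polynomial.coeff_zero_eq_eval_zero]
    exact Qz_eval_zero d L (p (L+2)) _ tr xh
  · -- consistency with the history
    intro pr hpr
    simp only [HbulSS, Set.mem_insert_iff, Set.mem_singleton_iff] at hpr
    rcases hpr with h | h <;> subst h
    · exact ffS_two d L tr hlenle
    · exact ffS_one d L tr
  · -- exceptions and round consistency
    refine ⟨(Finset.range L).filter
      (fun t => labAt tr t = true ∧ d ≤ uC (2^(L+2)+t) tr), ?_, ?_⟩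
    · -- card ≤ k
      set Eset := (Finset.range L).filter
        (fun t => labAt tr t = true ∧ d ≤ uC (2^(L+2)+t) tr) with hE
      set BSlots := Eset.image (fun t => 2^(L+2)+t) with hBS
      have hinj : Set.InjOn (fun t => 2^(L+2)+t) Eset := by
        intro a _ c _ h
        simp only at h
        omega
      have hcard : BSlots.card = Eset.card := Finset.card_image_of_injOn hinj
      have hsub : BSlots ⊆ Finset.Ico (2^(L+2)) (2^(L+3)) := by
        intro z hz
        rw [hBS, Finset.mem_image] at hz
        obtain ⟨t, htE, rfl⟩ := hz
        rw [hE, Finset.mem_filter, Finset.mem_range] at htE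
        rw [Finset.mem_Ico]
        refine ⟨Nat.le_add_right _ _, ?_⟩
        have h1 : t < 2^(L+2) := by omega
        have h2 : (2:ℕ)^(L+3) = 2^(L+2) + 2^(L+2) := by ring
        omega
      have hsum1 : BSlots.card * d ≤ ∑ z ∈ BSlots, min (uC z tr) d := by
        have hterm : ∀ z ∈ BSlots, min (uC z tr) d = d := by
          intro z hz
          rw [hBS, Finset.mem_image] at hz
          obtain ⟨t, htE, rfl⟩ := hz
          rw [hE, Finset.mem_filter] at htE
          exact min_eq_right htE.2.2
        rw [Finset.sum_congr rfl hterm, Finset.sum_const, smul_eq_mul]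
      have hsum2 : ∑ z ∈ BSlots, min (uC z tr) d ≤ bC d L tr :=
        Finset.sum_le_sum_of_subset hsub
      have hble := bC_le k d L A tr hG
      by_contra hcon
      push_neg at hcon
      have h5 : (k+1) * d ≤ Eset.card * d := Nat.mul_le_mul_right d (by omega)
      have h9 : 1 ≤ (k+1)*d := Nat.mul_pos (by omega) hd
      have h6 : Eset.card * d ≤ BB k d := by
        calc Eset.card * d = BSlots.card * d := by rw [hcard]
          _ ≤ ∑ z ∈ BSlots, min (uC z tr) d := hsum1
          _ ≤ bC d L tr := hsum2
          _ ≤ BB k d := hble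
      unfold BB at h6
      omega
    · -- round consistency outside the exceptions
      intro t ht htE
      obtain ⟨g1, g2, g3⟩ := hG t ht
      have htL : t < L := by omega
      have hnb : ¬(labAt tr t = true ∧ d ≤ uC (2^(L+2)+t) tr) := by
        intro hcontra
        exact htE (by
          rw [Finset.mem_filter, Finset.mem_range]
          exact ⟨htL, hcontra⟩)
      have hfval : ffS d L tr (2^(L+2)+t) = labAt tr t := ffS_fresh d L tr t ht hnb
      have hlabat := labAt_eq tr t ht
      have hxXi : (tr.get ⟨t, ht⟩).1 ∈ XiSS (L+2) := by
        rw [g1]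
        refine ⟨Nat.le_add_right _ _, ?_⟩
        have h2 : (2:ℕ)^(L+3) = 2^(L+2) + 2^(L+2) := by ring
        show 2^(L+2) + t < 2^((L+2)+1)
        omega
      rcases g2 with ⟨hyh, hnone⟩ | ⟨hyh, hsome⟩
      · -- correct round
        rw [roundCons_none _ _ hnone]
        show ffS d L tr (tr.get ⟨t, ht⟩).1 = (tr.get ⟨t, ht⟩).2.2.1
        rw [g1, hfval, hlabat]
        unfold labE
        rw [hnone]
      · -- mistake round
        rw [roundCons_some _ _ _ _ hsome]
        have hlabel : ffS d L tr (tr.get ⟨t, ht⟩).1 = (advS k d L A (tr.take t)).2.1 := by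
          rw [g1, hfval, hlabat]
          unfold labE
          rw [hsome]
        refine ⟨hlabel, ?_⟩
        show psiSS d (L+2) (p (L+2)) (aaS d L (p (L+2)) (b (L+2) (ffS d L tr)) tr)
            (ffS d L tr) (tr.get ⟨t, ht⟩).1 (tr.get ⟨t, ht⟩).2.1
          = some (psiA L (tr.get ⟨t, ht⟩).1 (tr.get ⟨t, ht⟩).2.1)
        unfold psiSS psiA
        by_cases hxh : (tr.get ⟨t, ht⟩).2.1 ∈ XiSS (L+2)
        · rw [if_pos ⟨hxXi, hxh⟩, if_pos ⟨hxXi, hxh⟩]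
          have hval0 : PpolySS d (L+2) (p (L+2))
              (aaS d L (p (L+2)) (b (L+2) (ffS d L tr)) tr (tr.get ⟨t, ht⟩).2.1
                (ffS d L tr (tr.get ⟨t, ht⟩).1))
              (tr.get ⟨t, ht⟩).1 = 2^((L+2)+1) := by
            unfold PpolySS
            have hzero : (∑ j : Fin d,
                aaS d L (p (L+2)) (b (L+2) (ffS d L tr)) tr (tr.get ⟨t, ht⟩).2.1
                  (ffS d L tr (tr.get ⟨t, ht⟩).1) j *
                (((tr.get ⟨t, ht⟩).1 - 2^(L+2) + 1 : ℕ) : ZMod (p (L+2))) ^ (j:ℕ)) = 0 := by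
              by_cases hcnd : (ffS d L tr (tr.get ⟨t, ht⟩).1 = false
                  ∧ ffS d L tr (tr.get ⟨t, ht⟩).2.1 = true)
              · have haa : aaS d L (p (L+2)) (b (L+2) (ffS d L tr)) tr (tr.get ⟨t, ht⟩).2.1
                    (ffS d L tr (tr.get ⟨t, ht⟩).1)
                    = fun j : Fin d => (QzS d L (p (L+2)) (b (L+2) (ffS d L tr)) tr
                        (tr.get ⟨t, ht⟩).2.1).coeff (j:ℕ) := by
                  unfold aaS
                  rw [if_pos ⟨hcnd.1, hcnd.2⟩]
                have hxh1 : (tr.get ⟨t, ht⟩).2.1 ≠ 1 := by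
                  have := hxh.1
                  omega
                have hdeg : (QzS d L (p (L+2)) (b (L+2) (ffS d L tr)) tr
                    (tr.get ⟨t, ht⟩).2.1).natDegree < d :=
                  Qz_natdeg d L (p (L+2)) _ tr _ hd
                    (ffS_true_unburned d L tr _ hxh1 hcnd.2)
                rw [haa, sum_coeff_eval d (p (L+2)) _ hdeg]
                have hyA : (advS k d L A (tr.take t)).2.1 = false := by
                  rw [← hlabel]
                  exact hcnd.1
                have hbadE : isBadE (tr.get ⟨t, ht⟩) = true := by
                  unfold isBadE
                  rw [hsome, hyA]
                have hcode : (((tr.get ⟨t, ht⟩).1 - 2^(L+2) + 1 : ℕ) : ZMod (p (L+2)))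
                    ∈ codesZ L (p (L+2)) tr (tr.get ⟨t, ht⟩).2.1 := by
                  unfold codesZ
                  rw [List.mem_toFinset]
                  refine List.mem_map.mpr ⟨tr.get ⟨t, ht⟩, ?_, rfl⟩
                  rw [List.mem_filter]
                  refine ⟨tr.get_mem _, ?_⟩
                  simp only [List.get_eq_getElem] at hbadE
                  simp [hbadE]
                have hw0 : (((tr.get ⟨t, ht⟩).1 - 2^(L+2) + 1 : ℕ) : ZMod (p (L+2))) ≠ 0 := by
                  have hxv : ((tr.get ⟨t, ht⟩).1 - 2^(L+2) + 1 : ℕ) = t + 1 := by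
                    rw [g1]; omega
                  rw [hxv]
                  intro hz
                  rw [ZMod.natCast_eq_zero_iff] at hz
                  have := Nat.le_of_dvd (by omega) hz
                  omega
                exact Qz_eval_code d L (p (L+2)) _ tr _ _ hcode hw0
              · have haa : aaS d L (p (L+2)) (b (L+2) (ffS d L tr)) tr (tr.get ⟨t, ht⟩).2.1
                    (ffS d L tr (tr.get ⟨t, ht⟩).1) = 0 := by
                  unfold aaS
                  rw [if_neg]
                  intro hc
                  exact hcnd ⟨hc.1, hc.2⟩
                rw [haa]
                simp
            rw [hzero, ZMod.val_zero]
            omega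
          rw [hval0]
        · have h' : ¬((tr.get ⟨t, ht⟩).1 ∈ XiSS (L+2) ∧ (tr.get ⟨t, ht⟩).2.1 ∈ XiSS (L+2)) :=
            fun hc => hxh hc.2
          rw [if_neg h', if_neg h']

end SSLB

/-- **Lemma (lower bound for the secret-sharing construction).** In the
secret-sharing construction with parameter `d` (with primes
`p_i ≥ 2^{|X_i|} = 2^{2^i}` and injections `b_i` of `F^d_i` into the field of
size `p_i`): for all `k, d ≥ 1`, every `L ≥ 4(k+1)d`, and every (possibly
randomized, legal) DFF algorithm `𝒜`, the expected worst-case mistake count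
against an adaptive adversary satisfies
`M^L_k(𝒜, 𝒯^{d+1}, H_•) ≥ (k+1)d − 1`. -/
theorem secret_sharing_lower_bound (k d : ℕ) (hk : 1 ≤ k) (hd : 1 ≤ d)
    (L : ℕ) (hL : 4 * (k + 1) * d ≤ L) (p : ℕ → ℕ)
    (hp : ∀ i : ℕ, (p i).Prime) (hp2 : ∀ i : ℕ, 2 ^ (2 ^ i) ≤ p i)
    (b : ∀ i : ℕ, (ℕ → Bool) → ZMod (p i))
    (hb : ∀ i : ℕ, Set.InjOn (b i) (FdiSS i))
    (A : RandAlg ℕ Bool) (hA : LegalRand A HbulSS) :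
    (((k + 1) * d - 1 : ℕ) : ℝ≥0∞) ≤ MLk A (TfullSS d p b) HbulSS k L := by
  classical
  have hmem : (SSLB.advS k d L A) ∈ {adv : Adversary ℕ Bool |
      ∀ tr ∈ (runPMF A adv L).support, kConsistent (TfullSS d p b) HbulSS k tr} := by
    intro tr htr
    obtain ⟨hGood, hlen⟩ := SSLB.support_good k d L A hA L tr htr
    exact SSLB.consis k d L hk hd p hp hp2 b A tr hGood hlen
  have hpot := SSLB.potential k d L hk hd A hA L [] (SSLB.good_nil k d L A)
  have h0 : mistakesA ([] : ATranscript ℕ Bool) = 0 := rfl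
  have hr : SSLB.rP k d L [] = 16 * SSLB.BB k d + 8 * k := by
    have hb0 : SSLB.bC d L [] = 0 := by
      unfold SSLB.bC SSLB.uC
      simp
    have hs0 : SSLB.sC [] = 0 := by
      unfold SSLB.sC
      simp
    unfold SSLB.rP
    rw [hb0, hs0]
    omega
  rw [h0, hr] at hpot
  simp only [Nat.cast_zero, mul_zero, zero_add] at hpot
  have hfin : 16 * SSLB.BB k d * 2^L ≤ SSLB.Hn L (16 * SSLB.BB k d + 8*k) :=
    SSLB.Hn_final k d L hk hd hL
  have h1 : ((16 * SSLB.BB k d * 2^L : ℕ) : ℝ≥0∞)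
      ≤ (2^L : ℝ≥0∞) * (16 * SSLB.valF k d L A L []) :=
    le_trans (by exact_mod_cast hfin) hpot
  have h2 : ((2:ℝ≥0∞)^L * 16) * ((SSLB.BB k d : ℕ) : ℝ≥0∞)
      ≤ ((2:ℝ≥0∞)^L * 16) * SSLB.valF k d L A L [] := by
    calc ((2:ℝ≥0∞)^L * 16) * ((SSLB.BB k d : ℕ) : ℝ≥0∞)
        = ((16 * SSLB.BB k d * 2^L : ℕ) : ℝ≥0∞) := by push_cast; ring
      _ ≤ (2^L : ℝ≥0∞) * (16 * SSLB.valF k d L A L []) := h1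
      _ = ((2:ℝ≥0∞)^L * 16) * SSLB.valF k d L A L [] := by ring
  have hc0 : ((2:ℝ≥0∞)^L * 16) ≠ 0 := by
    apply mul_ne_zero
    · exact pow_ne_zero L (by norm_num)
    · norm_num
  have hct : ((2:ℝ≥0∞)^L * 16) ≠ ⊤ := by
    apply ENNReal.mul_ne_top
    · exact ENNReal.pow_ne_top (by norm_num)
    · norm_num
  have h3 : ((SSLB.BB k d : ℕ) : ℝ≥0∞) ≤ SSLB.valF k d L A L [] :=
    (ENNReal.mul_le_mul_iff_right hc0 hct).mp h2
  have h4 : ((SSLB.BB k d : ℕ) : ℝ≥0∞) ≤ expMistakes A (SSLB.advS k d L A) L := by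
    rw [SSLB.val_eq k d L A]
    exact h3
  have h5 : expMistakes A (SSLB.advS k d L A) L ≤ MLk A (TfullSS d p b) HbulSS k L := by
    unfold MLk
    exact le_iSup₂ (f := fun adv _ => expMistakes A adv L) (SSLB.advS k d L A) hmem
  calc (((k + 1) * d - 1 : ℕ) : ℝ≥0∞) = ((SSLB.BB k d : ℕ) : ℝ≥0∞) := rfl
    _ ≤ _ := le_trans h4 h5
end

section
/- For all integers n ≥ 1 and L with L ≥ 4n, the binomial tail satisfies ∑_{j=0}^{n−1} C(L,j) ≤ (3/4)^{n−1} · 2^L; equivalently, ∑_{j=0}^{n−1} C(L,j) · 2^{−L} ≤ (3/4)^{n−1}. -/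
/-- **Lemma (binomial tail bound).** For all integers `n ≥ 1` and `L ≥ 4n`,
the binomial tail satisfies `∑_{j=0}^{n−1} C(L, j) ≤ (3/4)^{n−1} · 2^L`;
equivalently, a `Binomial(L, 1/2)` random variable is at most `n − 1` with
probability at most `(3/4)^{n−1}`. -/
theorem binomial_tail_bound (n L : ℕ) (hn : 1 ≤ n) (hL : 4 * n ≤ L) :
    (∑ j ∈ Finset.range n, (L.choose j : ℝ)) ≤
      (3 / 4 : ℝ) ^ (n - 1) * 2 ^ L := by
  set m := n - 1 with hm
  have h1 : ∑ j ∈ Finset.range n, (L.choose j : ℝ)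
      ≤ 3 ^ m * ∑ j ∈ Finset.range n, (L.choose j : ℝ) * (1/3)^j := by
    rw [Finset.mul_sum]
    apply Finset.sum_le_sum
    intro j hj
    have hj' : j ≤ m := by
      have := Finset.mem_range.mp hj; omega
    have hge : (1:ℝ) ≤ 3 ^ m * (1/3)^j := by
      rw [one_div, inv_pow, ← div_eq_mul_inv, le_div_iff₀ (by positivity)]
      calc (1:ℝ) * 3 ^ j = 3 ^ j := one_mul _
        _ ≤ 3 ^ m := pow_le_pow_right₀ (by norm_num) hj'
    have hc : (0:ℝ) ≤ (L.choose j : ℝ) := Nat.cast_nonneg _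
    nlinarith
  have h2 : ∑ j ∈ Finset.range n, (L.choose j : ℝ) * (1/3)^j ≤ (4/3)^L := by
    have hsub : Finset.range n ⊆ Finset.range (L+1) :=
      Finset.range_subset_range.mpr (by omega)
    calc ∑ j ∈ Finset.range n, (L.choose j : ℝ) * (1/3)^j
        ≤ ∑ j ∈ Finset.range (L+1), (L.choose j : ℝ) * (1/3)^j :=
          Finset.sum_le_sum_of_subset_of_nonneg hsub (fun i _ _ => by positivity)
      _ = ((1:ℝ)/3 + 1)^L := by
          rw [add_pow]
          apply Finset.sum_congr rfl
          intro j hj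
          simp [mul_comm]
      _ = (4/3)^L := by norm_num
  have key : (4:ℝ)^m ≤ (3/2)^L := by
    calc (4:ℝ)^m ≤ (81/16)^m := pow_le_pow_left₀ (by norm_num) (by norm_num) _
      _ = ((3/2:ℝ)^4)^m := by norm_num
      _ = (3/2:ℝ)^(4*m) := by rw [← pow_mul]
      _ ≤ (3/2)^L := pow_le_pow_right₀ (by norm_num) (by omega)
  have e1 : ((4:ℝ)/3)^L * (3/2)^L = 2^L := by rw [← mul_pow]; norm_num
  have e2 : ((3:ℝ)/4)^m * 4^m = 3^m := by rw [← mul_pow]; norm_num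
  have h3 : (3:ℝ)^m * (4/3)^L ≤ (3/4)^m * 2^L := by
    calc (3:ℝ)^m * (4/3)^L = (3/4)^m * 4^m * (4/3)^L := by rw [e2]
      _ ≤ (3/4)^m * (3/2)^L * (4/3)^L := by gcongr <;> positivity
      _ = (3/4)^m * ((4/3)^L * (3/2)^L) := by ring
      _ = (3/4)^m * 2^L := by rw [e1]
  calc ∑ j ∈ Finset.range n, (L.choose j : ℝ)
      ≤ 3 ^ m * ∑ j ∈ Finset.range n, (L.choose j : ℝ) * (1/3)^j := h1
    _ ≤ 3 ^ m * (4/3)^L := by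
        apply mul_le_mul_of_nonneg_left h2 (by positivity)
    _ ≤ (3/4)^m * 2^L := h3
end

section
/- Consider any general interactive prediction protocol satisfying Assumption 1 (mistake indicator) and Assumption 2 (suffix property), a class 𝒯 of generalized teachers, and an initial input I. Suppose 𝒜 is an algorithm for the protocol that makes at most d mistakes on every run whose feedback has zero exceptions with respect to 𝒯. Then the restart algorithm GAA(𝒜,𝒯,I) makes at most (k+1)·d + k mistakes on every run whose feedback has at most k exceptions with respect to 𝒯. -/
open scoped Classical

section GeneralProtocol

/- A general interactive prediction protocol: there is an initial input `I`
(of type `ι`); in each round the environment provides an example of type `X`,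
the algorithm outputs a value of type `Z`, and the environment provides
feedback of type `W`.  The protocol specifies, for every initial input,
current example and past interaction, the set of legal outputs
(`legal`), and, for every generalized teacher of type `T`, which feedbacks
are consistent with it given the round's example and output (`conforms`).
Assumption 1 (mistake indicator) is represented by a fixed Boolean function
`isM` of a round `(x, z, w)`. -/
variable {ι X Z W T : Type}

/-- An algorithm for the protocol (with the initial input fixed): a function
from the past interaction and the current example to an output. -/
abbrev ProtoAlg (X Z W : Type) : Type := List (X × Z × W) → X → Z

/-- `tr` is a run of the algorithm `alg`: each recorded output is the one
produced by `alg` from the past interaction and the current example. -/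
def IsRunOf (alg : ProtoAlg X Z W) (tr : List (X × Z × W)) : Prop :=
  ∀ (t : ℕ) (h : t < tr.length),
    (tr.get ⟨t, h⟩).2.1 = alg (tr.take t) (tr.get ⟨t, h⟩).1

/-- The run `tr` has at most `k` exceptions with respect to the teacher class
`𝒯`: outside a set of at most `k` rounds, all feedbacks are consistent with a
single teacher of `𝒯`. -/
def AtMostExc (conforms : T → X → Z → W → Prop) (𝒯 : Set T) (k : ℕ)
    (tr : List (X × Z × W)) : Prop :=
  ∃ T₀ ∈ 𝒯, ∃ E : Finset ℕ, E.card ≤ k ∧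
    ∀ (t : ℕ) (h : t < tr.length), t ∉ E →
      conforms T₀ (tr.get ⟨t, h⟩).1 (tr.get ⟨t, h⟩).2.1 (tr.get ⟨t, h⟩).2.2

/-- The running suffix of the transcript used by the restart algorithm `GAA`:
the rounds since the last restart, where a restart occurs each time the
current segment accumulates `d + 1` mistakes. -/
def gaaSuffix (d : ℕ) (isM : X × Z × W → Bool) (tr : List (X × Z × W)) :
    List (X × Z × W) :=
  tr.foldl
    (fun seg e =>
      if (seg ++ [e]).countP isM = d + 1 then [] else seg ++ [e]) []

/-- The Generic Agnostic Algorithm `GAA(𝒜, 𝒯, I)`: run `𝒜` (initialized on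
`(𝒯, I)`), counting its mistakes, and re-initialize `𝒜` each time the count
reaches `d + 1`. -/
def GAA (d : ℕ) (isM : X × Z × W → Bool) (alg : ProtoAlg X Z W) :
    ProtoAlg X Z W :=
  fun tr x => alg (gaaSuffix d isM tr) x

/-! ### Auxiliary lemmas -/

private def gstep (d : ℕ) (isM : X × Z × W → Bool)
    (seg : List (X × Z × W)) (e : X × Z × W) : List (X × Z × W) :=
  if (seg ++ [e]).countP isM = d + 1 then [] else seg ++ [e]

private lemma gaaSuffix_eq_foldl (d : ℕ) (isM : X × Z × W → Bool)
    (l : List (X × Z × W)) : gaaSuffix d isM l = l.foldl (gstep d isM) [] := rfl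

private lemma gaaSuffix_append (d : ℕ) (isM : X × Z × W → Bool)
    (l u : List (X × Z × W)) :
    gaaSuffix d isM (l ++ u) = u.foldl (gstep d isM) (gaaSuffix d isM l) := by
  simp [gaaSuffix_eq_foldl, List.foldl_append]

private lemma gaaSuffix_append_nil {d : ℕ} {isM : X × Z × W → Bool}
    {l : List (X × Z × W)} (h : gaaSuffix d isM l = []) (u : List (X × Z × W)) :
    gaaSuffix d isM (l ++ u) = gaaSuffix d isM u := by
  rw [gaaSuffix_append, h, gaaSuffix_eq_foldl]

private lemma gaaSuffix_concat (d : ℕ) (isM : X × Z × W → Bool)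
    (l : List (X × Z × W)) (e : X × Z × W) :
    gaaSuffix d isM (l ++ [e]) = gstep d isM (gaaSuffix d isM l) e := by
  rw [gaaSuffix_append]; rfl

private lemma gaaSuffix_countP_le (d : ℕ) (isM : X × Z × W → Bool)
    (l : List (X × Z × W)) : (gaaSuffix d isM l).countP isM ≤ d := by
  induction l using List.reverseRecOn with
  | nil => simp [gaaSuffix_eq_foldl]
  | append_singleton l e ih =>
    rw [gaaSuffix_concat]
    unfold gstep
    split
    · simp
    · rename_i h
      have h1 : (gaaSuffix d isM l ++ [e]).countP isM
          ≤ (gaaSuffix d isM l).countP isM + 1 := by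
        rw [List.countP_append]
        have := List.countP_le_length (l := [e]) (p := isM)
        simp at this
        cases h : isM e <;> simp [List.countP_singleton, h]
      omega

/-- Main induction: mistake bound for `GAA`, by strong induction on the
length of the trace (via an explicit bound `N`). -/
private lemma gaa_aux {ι : Type} (legal : ι → X → List (X × Z × W) → Set Z)
    (conforms : T → X → Z → W → Prop) (isM : X × Z × W → Bool)
    (𝒯 : Set T) (alg : ProtoAlg X Z W) (d : ℕ)
    (hreal : ∀ tr : List (X × Z × W), IsRunOf alg tr →
      AtMostExc conforms 𝒯 0 tr → tr.countP isM ≤ d) :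
    ∀ (N k : ℕ) (tr : List (X × Z × W)), tr.length ≤ N →
      IsRunOf (GAA d isM alg) tr →
      ∀ T₀ ∈ 𝒯, ∀ E : Finset ℕ, E.card ≤ k →
        (∀ (t : ℕ) (h : t < tr.length), t ∉ E →
          conforms T₀ (tr.get ⟨t, h⟩).1 (tr.get ⟨t, h⟩).2.1 (tr.get ⟨t, h⟩).2.2) →
        tr.countP isM ≤ (k + 1) * d + k := by
  intro N
  induction N with
  | zero =>
    intro k tr hlen _ _ _ _ _ _
    have : tr = [] := List.length_eq_zero_iff.mp (Nat.le_zero.mp hlen)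
    simp [this]
  | succ N ih =>
    intro k tr hlen hrun T₀ hT₀ E hE hconf
    by_cases hres : ∃ n, 0 < n ∧ n ≤ tr.length ∧ gaaSuffix d isM (tr.take n) = []
    · -- there is a reset; take the first one
      classical
      obtain ⟨n, hn⟩ := hres
      -- minimal such n
      set P : ℕ → Prop := fun n => 0 < n ∧ n ≤ tr.length ∧ gaaSuffix d isM (tr.take n) = [] with hP
      have hPn : P n := hn
      have hfind := Nat.find_spec ⟨n, hPn⟩
      set n₀ := Nat.find ⟨n, hPn⟩ with hn₀
      obtain ⟨hn₀pos, hn₀le, hn₀nil⟩ := hfind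
      have hmin : ∀ m, m < n₀ → ¬ P m := fun m hm => Nat.find_min _ hm
      -- before the first reset, the suffix is the whole prefix
      have hpref : ∀ m, m < n₀ → gaaSuffix d isM (tr.take m) = tr.take m := by
        intro m hm
        induction m with
        | zero => simp [gaaSuffix_eq_foldl]
        | succ m ihm =>
          have hm' : m < n₀ := Nat.lt_of_succ_lt hm
          have hmlen : m < tr.length := by omega
          have htake : tr.take (m + 1) = tr.take m ++ [tr[m]] := by
            rw [← List.take_concat_get hmlen, List.concat_eq_append]
          rw [htake, gaaSuffix_concat, ihm hm']
          unfold gstep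
          split
          · exfalso
            exact hmin (m+1) hm ⟨Nat.succ_pos m, by omega, by rw [htake, gaaSuffix_concat, ihm hm']; unfold gstep; simp_all⟩
          · rfl
      -- the first segment `tr.take n₀` has exactly d+1 mistakes
      have hm1len : n₀ - 1 < tr.length := by omega
      have htaken : tr.take n₀ = tr.take (n₀ - 1) ++ [tr[n₀-1]] := by
        conv_lhs => rw [show n₀ = (n₀ - 1) + 1 by omega]
        rw [← List.take_concat_get hm1len, List.concat_eq_append]
      have hcount1 : (tr.take n₀).countP isM = d + 1 := by
        have := hn₀nil
        rw [htaken, gaaSuffix_concat, hpref (n₀-1) (by omega)] at this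
        unfold gstep at this
        split at this
        · rw [htaken]; assumption
        · exact (List.cons_ne_nil _ _ (List.append_eq_nil_iff.mp this).2).elim
      -- `tr.take n₀` is a run of `alg`
      have hrun1 : IsRunOf alg (tr.take n₀) := by
        intro t ht
        have ht' : t < n₀ := by
          have := ht; simp [List.length_take] at this; omega
        have htlen : t < tr.length := by omega
        have hget : (tr.take n₀).get ⟨t, ht⟩ = tr[t] := List.getElem_take
        have := hrun t htlen
        simp only [List.get_eq_getElem] at this hget ⊢
        rw [hget, this]
        show alg (gaaSuffix d isM (tr.take t)) _ = _
        rw [hpref t ht', List.take_take]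
        congr 2
        omega
      -- the first segment must contain an exception
      have hexc : ∃ t₀, t₀ < n₀ ∧ t₀ ∈ E := by
        by_contra hno
        push_neg at hno
        have : AtMostExc conforms 𝒯 0 (tr.take n₀) := by
          refine ⟨T₀, hT₀, ∅, le_refl 0, ?_⟩
          intro t ht _
          have ht' : t < n₀ := by
            have := ht; simp [List.length_take] at this; omega
          have htlen : t < tr.length := by omega
          have hget : (tr.take n₀).get ⟨t, ht⟩ = tr[t] := List.getElem_take
          simp only [List.get_eq_getElem] at hget ⊢
          rw [hget]
          have := hconf t htlen (hno t ht')
          simpa using this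
        have := hreal _ hrun1 this
        omega
      obtain ⟨t₀, ht₀lt, ht₀E⟩ := hexc
      -- hence k ≥ 1
      obtain _ | k' := k
      · exact absurd ht₀E (by
          have : E = ∅ := Finset.card_eq_zero.mp (Nat.le_zero.mp hE)
          simp [this])
      -- the rest of the trace
      set tr₂ := tr.drop n₀ with htr₂
      have hlen₂ : tr₂.length = tr.length - n₀ := List.length_drop
      have hsplit : ∀ t : ℕ, gaaSuffix d isM (tr.take (n₀ + t)) = gaaSuffix d isM (tr₂.take t) := by
        intro t
        rw [List.take_add, gaaSuffix_append_nil hn₀nil]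
      have hrun2 : IsRunOf (GAA d isM alg) tr₂ := by
        intro t ht
        have htlen : n₀ + t < tr.length := by omega
        have hget : tr₂.get ⟨t, ht⟩ = tr[n₀ + t] := List.getElem_drop
        have := hrun (n₀ + t) htlen
        simp only [List.get_eq_getElem] at this hget ⊢
        rw [hget, this]
        show alg (gaaSuffix d isM (tr.take (n₀ + t))) _ = alg (gaaSuffix d isM (tr₂.take t)) _
        rw [hsplit t]
      -- shifted exception set
      set E₂ : Finset ℕ := (E.erase t₀).image (· - n₀) with hE₂
      have hE₂card : E₂.card ≤ k' := by
        have h1 : E₂.card ≤ (E.erase t₀).card := Finset.card_image_le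
        have h2 : (E.erase t₀).card = E.card - 1 := Finset.card_erase_of_mem ht₀E
        have h3 : 1 ≤ E.card := Finset.card_pos.mpr ⟨t₀, ht₀E⟩
        omega
      have hconf2 : ∀ (t : ℕ) (h : t < tr₂.length), t ∉ E₂ →
          conforms T₀ (tr₂.get ⟨t, h⟩).1 (tr₂.get ⟨t, h⟩).2.1 (tr₂.get ⟨t, h⟩).2.2 := by
        intro t ht htE₂
        have htlen : n₀ + t < tr.length := by omega
        have hnE : n₀ + t ∉ E := by
          intro hmem
          apply htE₂
          refine Finset.mem_image.mpr ⟨n₀ + t, ?_, by omega⟩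
          exact Finset.mem_erase.mpr ⟨by omega, hmem⟩
        have hget : tr₂.get ⟨t, ht⟩ = tr[n₀ + t] := List.getElem_drop
        have := hconf (n₀ + t) htlen hnE
        simp only [List.get_eq_getElem] at this hget ⊢
        rw [hget]
        exact this
      have hbound2 : tr₂.countP isM ≤ (k' + 1) * d + k' :=
        ih k' tr₂ (by omega) hrun2 T₀ hT₀ E₂ hE₂card hconf2
      -- combine
      have hsplitcount : tr.countP isM = (tr.take n₀).countP isM + tr₂.countP isM := by
        conv_lhs => rw [← List.take_append_drop n₀ tr]
        rw [List.countP_append]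
      have hmul : (k' + 1 + 1) * d = (k' + 1) * d + d := by ring
      omega
    · -- no reset ever: the suffix is the whole trace, hence at most d mistakes
      push_neg at hres
      have hpref : ∀ m, m ≤ tr.length → gaaSuffix d isM (tr.take m) = tr.take m := by
        intro m hm
        induction m with
        | zero => simp [gaaSuffix_eq_foldl]
        | succ m ihm =>
          have hmlen : m < tr.length := by omega
          have htake : tr.take (m + 1) = tr.take m ++ [tr[m]] := by
            rw [← List.take_concat_get hmlen, List.concat_eq_append]
          rw [htake, gaaSuffix_concat, ihm (by omega)]
          unfold gstep
          split
          · exfalso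
            refine hres (m+1) (Nat.succ_pos m) hm ?_
            rw [htake, gaaSuffix_concat, ihm (by omega)]
            unfold gstep
            simp_all
          · rfl
      have := gaaSuffix_countP_le d isM tr
      rw [show gaaSuffix d isM tr = tr by
        have := hpref tr.length le_rfl; simpa using this] at this
      have : tr.countP isM ≤ d := this
      nlinarith

/-- **Theorem (mistake bound of the Generic Agnostic Algorithm).** Consider a
general interactive prediction protocol satisfying Assumption 1 (there is a
fixed mistake indicator `isM`) and Assumption 2 (the legal outputs on a
suffix of a run are legal on the whole run), a class `𝒯` of generalized
teachers and an initial input `I`.  Suppose `𝒜` is an algorithm for the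
protocol (its outputs are always legal) making at most `d` mistakes on every
run of `𝒜` with zero exceptions with respect to `𝒯`.  Then the restart
algorithm `GAA(𝒜, 𝒯, I)` makes at most `(k+1)·d + k` mistakes on every run
of it with at most `k` exceptions with respect to `𝒯`. -/
theorem gaa_mistake_bound (legal : ι → X → List (X × Z × W) → Set Z)
    (conforms : T → X → Z → W → Prop) (isM : X × Z × W → Bool)
    (𝒯 : Set T) (I : ι)
    (hsuffix : ∀ (x : X) (past : List (X × Z × W)) (l : ℕ),
      legal I x (past.drop l) ⊆ legal I x past)
    (alg : ProtoAlg X Z W)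
    (hlegal : ∀ (past : List (X × Z × W)) (x : X), alg past x ∈ legal I x past)
    (d : ℕ)
    (hreal : ∀ tr : List (X × Z × W), IsRunOf alg tr →
      AtMostExc conforms 𝒯 0 tr → tr.countP isM ≤ d)
    (k : ℕ) :
    ∀ tr : List (X × Z × W), IsRunOf (GAA d isM alg) tr →
      AtMostExc conforms 𝒯 k tr → tr.countP isM ≤ (k + 1) * d + k := by
  intro tr hrun hexc
  obtain ⟨T₀, hT₀, E, hE, hconf⟩ := hexc
  exact gaa_aux legal conforms isM 𝒯 alg d hreal tr.length k tr le_rfl hrun T₀ hT₀ E hE hconf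


end GeneralProtocol
end
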